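/- arXiv:1111.5150 — 2 statements merged into one kernel-verified Lean document; each statement's English description precedes it below -/
import Mathlib

section
/- Fix n ≥ 1, injective ρ-functions ρ^{(k)} for 1 ≤ k ≤ n, and the derived functions f_i (i ≤ n) on increasing tuples from ω_n as defined from the ρ^{(k)}. Let B_n be the family of all finite subsets s of ω_n such that the restriction of f_n to increasing (n+1)-tuples from s is min-dependant and, for every i < n, the restriction of f_i to increasing (i+1)-tuples from s is shift-increasing. Then: (i) B_n is a very-large family of finite subsets of ω_n; and (ii) whenever s ≠ t are in B_n, |s| = |t|, and f_n(s[I]) = f_n(t[I]) for every (n+1)-element subset I of {0, 1, …, |s|−1} (where s[I] denotes the image of I under the increasing enumeration of s), the sets s and t are in (2n−1)-Δ-position. -/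
/-- `ω_k` as an ordinal (`ω_0 = ω`). -/
noncomputable def omegaOrd (k : ℕ) : Ordinal := (Cardinal.aleph k).ord

/-- A system of injective ρ-functions: for each `1 ≤ k ≤ n`, `ρ k` is symmetric on
distinct ordinals below `ω_k`, takes values below `ω_{k-1}`, and satisfies (a)
subadditivity, (b) injectivity in the first coordinate, and (c) `ρ(α,β) ≠ ρ(β,γ)`. -/
def IsRhoSystem (n : ℕ) (ρ : ℕ → Ordinal → Ordinal → Ordinal) : Prop :=
  ∀ k : ℕ, 1 ≤ k → k ≤ n →
    (∀ α β, α < omegaOrd k → β < omegaOrd k → α ≠ β → ρ k α β = ρ k β α) ∧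
    (∀ α β, α < omegaOrd k → β < omegaOrd k → α ≠ β → ρ k α β < omegaOrd (k - 1)) ∧
    (∀ α β γ, α < β → β < γ → γ < omegaOrd k →
      ρ k α β ≤ max (ρ k α γ) (ρ k β γ) ∧ ρ k α γ ≤ max (ρ k α β) (ρ k β γ)) ∧
    (∀ α α' β, α < β → α' < β → β < omegaOrd k → α ≠ α' → ρ k α β ≠ ρ k α' β) ∧
    (∀ α β γ, α < β → β < γ → γ < omegaOrd k → ρ k α β ≠ ρ k β γ)

/-- The functions `f_i` derived from the ρ-functions: `f_0(α) = α` and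
`f_{i+1}(α_0,…,α_{i+1}) = ρ^{(n-i)}(f_i(α_0,…,α_i), f_i(α_1,…,α_{i+1}))`
(with value `0` if the two arguments coincide).  A tuple `(α_0,…,α_i)` is
represented by a function `v : ℕ → Ordinal` via its first `i + 1` values. -/
noncomputable def fseq (n : ℕ) (ρ : ℕ → Ordinal → Ordinal → Ordinal) :
    ℕ → (ℕ → Ordinal) → Ordinal
  | 0, v => v 0
  | (i + 1), v =>
      if fseq n ρ i v = fseq n ρ i (fun j => v (j + 1)) then 0
      else ρ (n - i) (fseq n ρ i v) (fseq n ρ i (fun j => v (j + 1)))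


/-- `s < t` for finite sets of ordinals. -/
def BlkLt (s t : Finset Ordinal) : Prop := ∀ a ∈ s, ∀ b ∈ t, a < b

/-- `s ⊑ t` : `s` is an initial part of `t`. -/
def InitSeg (s t : Finset Ordinal) : Prop := s ⊆ t ∧ BlkLt s (t \ s)

/-- `A` and `B` are in `m`-Δ-position. -/
def DeltaPos (m : ℕ) (A B : Finset Ordinal) : Prop :=
  ∃ I J : Finset Ordinal, I ⊆ A ∩ B ∧ J ⊆ A ∩ B ∧ BlkLt I J ∧
    A ∩ B = I ∪ J ∧ J.card ≤ m ∧ InitSeg I A ∧ InitSeg I B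

/-- A very-large family of finite subsets of the ordinals below `κo`. -/
def VeryLarge (κo : Ordinal) (B : Set (Finset Ordinal)) : Prop :=
  ∀ A : Set Ordinal, A ⊆ Set.Iio κo → A.Infinite →
    ∃ A' ⊆ A, A'.Infinite ∧ ∀ s : Finset Ordinal, ↑s ⊆ A' → s ∈ B

/-- The `j`-th element of the finite set `s` in increasing order (`0` if out of range). -/
noncomputable def enumOf (s : Finset Ordinal) (j : ℕ) : Ordinal :=
  (s.sort (· ≤ ·)).getD j 0

/-- Membership in the family `B_n`: all elements below `ω_n`, `f_n` is min-dependant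
on increasing `(n+1)`-tuples from `s`, and `f_i` is shift-increasing on `s` for `i < n`. -/
def memBn (n : ℕ) (ρ : ℕ → Ordinal → Ordinal → Ordinal) (s : Finset Ordinal) : Prop :=
  (∀ a ∈ s, a < omegaOrd n) ∧
  (∀ v w : ℕ → Ordinal,
    (∀ j, j ≤ n → v j ∈ s) → (∀ j, j < n → v j < v (j + 1)) →
    (∀ j, j ≤ n → w j ∈ s) → (∀ j, j < n → w j < w (j + 1)) →
    fseq n ρ n v = fseq n ρ n w → v 0 = w 0) ∧
  (∀ i < n, ∀ v : ℕ → Ordinal,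
    (∀ j, j ≤ i + 1 → v j ∈ s) → (∀ j, j < i + 1 → v j < v (j + 1)) →
    fseq n ρ i v < fseq n ρ i (fun j => v (j + 1)))



section AuxStmt7
open Classical in
/-- Infinite Ramsey theorem for increasing `M`-tuples of naturals. -/
theorem ramseyTuples (M : ℕ) {C : Type} [Finite C] (c : (Fin M → ℕ) → C) :
    ∀ p : Set ℕ, p.Infinite →
      ∃ q ⊆ p, q.Infinite ∧ ∃ a : C, ∀ x : Fin M → ℕ,
        (∀ j, x j ∈ q) → StrictMono x → c x = a := by
  induction M with
  | zero =>
    intro p hp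
    refine ⟨p, le_refl _, hp, c finZeroElim, fun x hx hmx => ?_⟩
    congr 1
    exact funext fun j => j.elim0
  | succ M IH =>
    intro p hp
    -- step function
    have step : ∀ S : Set ℕ, S.Infinite →
        ∃ q ⊆ S \ Set.Iic (sInf S), q.Infinite ∧ ∃ a : C, ∀ y : Fin M → ℕ,
          (∀ j, y j ∈ q) → StrictMono y → c (Fin.cons (sInf S) y) = a := by
      intro S hS
      have hS' : (S \ Set.Iic (sInf S)).Infinite := hS.diff (Set.finite_Iic _)
      exact IH (fun y => c (Fin.cons (sInf S) y)) _ hS'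
    -- iterate
    let g : ℕ → {S : Set ℕ // S.Infinite ∧ S ⊆ p} := fun k =>
      Nat.rec ⟨p, hp, le_refl _⟩
        (fun _ T => ⟨choose (step T.1 T.2.1),
          (choose_spec (step T.1 T.2.1)).2.1,
          ((choose_spec (step T.1 T.2.1)).1.trans Set.diff_subset).trans T.2.2⟩) k
    have hgsub : ∀ k, (g (k+1)).1 ⊆ (g k).1 \ Set.Iic (sInf (g k).1) := fun k =>
      (choose_spec (step (g k).1 (g k).2.1)).1
    let x : ℕ → ℕ := fun k => sInf (g k).1
    let a : ℕ → C := fun k => choose (choose_spec (step (g k).1 (g k).2.1)).2.2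
    have ha : ∀ k, ∀ y : Fin M → ℕ, (∀ j, y j ∈ (g (k+1)).1) → StrictMono y →
        c (Fin.cons (x k) y) = a k := fun k =>
      choose_spec (choose_spec (step (g k).1 (g k).2.1)).2.2
    have hxmem : ∀ k, x k ∈ (g k).1 := fun k => csInf_mem (g k).2.1.nonempty
    have hmono : ∀ k l, k ≤ l → (g l).1 ⊆ (g k).1 := by
      intro k l hkl
      induction l with
      | zero => cases Nat.le_zero.mp hkl; exact fun _ h => h
      | succ l IHl =>
        rcases Nat.lt_or_ge k (l+1) with h | h
        · exact ((hgsub l).trans Set.diff_subset).trans (IHl (Nat.lt_succ_iff.mp h))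
        · cases le_antisymm hkl h; exact fun _ h => h
    have hxlt : ∀ k l, k < l → x k < x l := by
      intro k l hkl
      have h1 : x l ∈ (g (k+1)).1 := hmono _ _ hkl (hxmem l)
      have h2 := hgsub k h1
      simpa using h2.2
    have hxmem' : ∀ k l, k < l → x l ∈ (g (k+1)).1 := fun k l hkl =>
      hmono _ _ hkl (hxmem l)
    -- pigeonhole
    obtain ⟨b, hb⟩ := Finite.exists_infinite_fiber a
    have hK : (a ⁻¹' {b}).Infinite := Set.infinite_coe_iff.mp hb
    refine ⟨x '' (a ⁻¹' {b}), ?_, ?_, b, ?_⟩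
    · rintro _ ⟨k, -, rfl⟩; exact (g k).2.2 (hxmem k)
    · exact hK.image (Set.injOn_of_injective (fun k l hkl => by
        rcases lt_trichotomy k l with h | h | h
        · exact absurd hkl (ne_of_lt (hxlt _ _ h))
        · exact h
        · exact absurd hkl.symm (ne_of_lt (hxlt _ _ h))))
    · intro z hz hmz
      -- get indices
      choose k hk1 hk2 using hz
      have hkmono : StrictMono k := by
        intro i j hij
        have := hmz hij
        rw [← hk2 i, ← hk2 j] at this
        by_contra h
        rcases lt_or_eq_of_le (not_lt.mp h) with h' | h'
        · exact absurd (hxlt _ _ h') (not_lt.mpr (le_of_lt this))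
        · rw [h'] at this; exact lt_irrefl _ this
      have h0 : z = Fin.cons (x (k 0)) (fun j => z j.succ) := by
        funext j
        refine Fin.cases ?_ ?_ j
        · simp [hk2 0]
        · intro i; simp
      rw [h0, ha (k 0) _ ?_ ?_]
      · exact hk1 0
      · intro j
        rw [← hk2 j.succ]
        exact hxmem' (k 0) (k j.succ) (hkmono (Fin.succ_pos j))
      · intro i j hij
        exact hmz (by simpa using hij)

theorem omegaOrd_pos (k : ℕ) : 0 < omegaOrd k := by
  rw [omegaOrd, Cardinal.lt_ord]
  simpa using (Cardinal.aleph_pos k)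

theorem omegaOrd_mono {k l : ℕ} (h : k ≤ l) : omegaOrd k ≤ omegaOrd l := by
  rw [omegaOrd, omegaOrd, Cardinal.ord_le_ord]
  exact Cardinal.aleph_le_aleph.mpr (by exact_mod_cast h)

theorem fseq_congr (n : ℕ) (ρ : ℕ → Ordinal → Ordinal → Ordinal) :
    ∀ (i : ℕ) (v w : ℕ → Ordinal), (∀ j, j ≤ i → v j = w j) →
      fseq n ρ i v = fseq n ρ i w := by
  intro i
  induction i with
  | zero => intro v w h; exact h 0 (le_refl _)
  | succ i IH =>
    intro v w h
    have h1 : fseq n ρ i v = fseq n ρ i w := IH v w fun j hj => h j (hj.trans (Nat.le_succ i))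
    have h2 : fseq n ρ i (fun j => v (j+1)) = fseq n ρ i (fun j => w (j+1)) :=
      IH _ _ fun j hj => h (j+1) (by omega)
    simp only [fseq, h1, h2]

theorem fseq_bound {n : ℕ} {ρ : ℕ → Ordinal → Ordinal → Ordinal} (hρ : IsRhoSystem n ρ) :
    ∀ (i : ℕ), i ≤ n → ∀ v : ℕ → Ordinal, (∀ j, j ≤ i → v j < omegaOrd n) →
      fseq n ρ i v < omegaOrd (n - i) := by
  intro i
  induction i with
  | zero => intro _ v hv; simpa [fseq] using hv 0 (le_refl _)
  | succ i IH =>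
    intro hin v hv
    have hin' : i ≤ n := by omega
    have ha : fseq n ρ i v < omegaOrd (n - i) :=
      IH hin' v fun j hj => hv j (by omega)
    have hb : fseq n ρ i (fun j => v (j+1)) < omegaOrd (n - i) :=
      IH hin' _ fun j hj => hv (j+1) (by omega)
    by_cases h : fseq n ρ i v = fseq n ρ i (fun j => v (j+1))
    · simp only [fseq, if_pos h]
      exact omegaOrd_pos _
    · simp only [fseq, if_neg h]
      have hk1 : 1 ≤ n - i := by omega
      have hk2 : n - i ≤ n := by omega
      have := (hρ (n - i) hk1 hk2).2.1 _ _ ha hb h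
      have heq : n - i - 1 = n - (i+1) := by omega
      rwa [heq] at this

/-- Changing only the first coordinate of an `(n+1)`-tuple changes `f_n`. -/
theorem fseq_ne_of_head_ne {n : ℕ} {ρ : ℕ → Ordinal → Ordinal → Ordinal}
    (hρ : IsRhoSystem n ρ) (v w : ℕ → Ordinal)
    (hvw : ∀ j, 1 ≤ j → j ≤ n → v j = w j) (h0 : v 0 ≠ w 0)
    (hvb : ∀ j, j ≤ n → v j < omegaOrd n) (hwb : ∀ j, j ≤ n → w j < omegaOrd n)
    (hv_si : ∀ i, i < n → fseq n ρ i v < fseq n ρ i (fun j => v (j+1)))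
    (hw_si : ∀ i, i < n → fseq n ρ i w < fseq n ρ i (fun j => w (j+1))) :
    fseq n ρ n v ≠ fseq n ρ n w := by
  have key : ∀ i, i ≤ n → fseq n ρ i v ≠ fseq n ρ i w := by
    intro i
    induction i with
    | zero => intro _; exact h0
    | succ i IH =>
      intro hin
      have hin' : i < n := by omega
      have htail : fseq n ρ i (fun j => v (j+1)) = fseq n ρ i (fun j => w (j+1)) :=
        fseq_congr n ρ i _ _ fun j hj => hvw (j+1) (by omega) (by omega)
      have hav := hv_si i hin'
      have haw := hw_si i hin'
      set b := fseq n ρ i (fun j => v (j+1)) with hbdef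
      have hne_v : fseq n ρ i v ≠ b := ne_of_lt hav
      have hne_w : fseq n ρ i w ≠ fseq n ρ i (fun j => w (j+1)) := ne_of_lt haw
      have hbb : fseq n ρ (i+1) v = ρ (n - i) (fseq n ρ i v) b := by
        simp only [fseq]
        exact if_neg hne_v
      have hbw : fseq n ρ (i+1) w = ρ (n - i) (fseq n ρ i w) b := by
        simp only [fseq, if_neg hne_w]
        rw [← htail]
      rw [hbb, hbw]
      have hblt : b < omegaOrd (n - i) :=
        fseq_bound hρ i (by omega) _ fun j hj => hvb (j+1) (by omega)
      exact (hρ (n - i) (by omega) (by omega)).2.2.2.1 _ _ _ hav (htail ▸ haw) hblt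
        (IH (by omega))
  exact key n (le_refl n)

theorem enumOf_mem {s : Finset Ordinal} {j : ℕ} (h : j < s.card) : enumOf s j ∈ s := by
  rw [enumOf, List.getD_eq_getElem _ _ (by rwa [Finset.length_sort])]
  rw [← Finset.mem_sort (· ≤ ·)]
  exact List.getElem_mem _

theorem enumOf_lt_enumOf {s : Finset Ordinal} {j k : ℕ} (hjk : j < k) (h : k < s.card) :
    enumOf s j < enumOf s k := by
  have hj : j < (s.sort (· ≤ ·)).length := by rw [Finset.length_sort]; omega
  have hk : k < (s.sort (· ≤ ·)).length := by rwa [Finset.length_sort]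
  rw [enumOf, enumOf, List.getD_eq_getElem _ _ hj, List.getD_eq_getElem _ _ hk]
  exact List.Pairwise.rel_get_of_lt (Finset.sortedLT_sort s).pairwise (by simpa using hjk)

theorem exists_enumOf {s : Finset Ordinal} {a : Ordinal} (h : a ∈ s) :
    ∃ j, j < s.card ∧ enumOf s j = a := by
  rw [← Finset.mem_sort (· ≤ ·), List.mem_iff_getElem] at h
  obtain ⟨j, hj, hja⟩ := h
  refine ⟨j, by rwa [Finset.length_sort] at hj, ?_⟩
  rw [enumOf, List.getD_eq_getElem _ _ hj, hja]

theorem enumOf_injOn {s : Finset Ordinal} {j k : ℕ} (hj : j < s.card) (hk : k < s.card)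
    (h : enumOf s j = enumOf s k) : j = k := by
  rcases lt_trichotomy j k with h' | h' | h'
  · exact absurd h (ne_of_lt (enumOf_lt_enumOf h' hk))
  · exact h'
  · exact absurd h.symm (ne_of_lt (enumOf_lt_enumOf h' hj))

theorem eq_of_enumOf_eq {s t : Finset Ordinal} (hcard : s.card = t.card)
    (h : ∀ j, j < s.card → enumOf s j = enumOf t j) : s = t := by
  apply Finset.ext
  intro a
  constructor
  · intro ha
    obtain ⟨j, hj, rfl⟩ := exists_enumOf ha
    rw [h j hj]
    exact enumOf_mem (by omega)
  · intro ha
    obtain ⟨j, hj, rfl⟩ := exists_enumOf ha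
    rw [← h j (by omega)]
    exact enumOf_mem (by omega)

/-- Extract a strictly increasing ω-sequence from an infinite set of ordinals. -/
theorem exists_strictMono_seq {A : Set Ordinal} (hA : A.Infinite) :
    ∃ e : ℕ → Ordinal, StrictMono e ∧ ∀ k, e k ∈ A := by
  classical
  let F : ℕ → Finset Ordinal := fun k =>
    Nat.rec ∅ (fun _ Fk => insert (sInf (A \ ↑Fk)) Fk) k
  have hne : ∀ k, (A \ SetLike.coe (F k)).Nonempty := by
    intro k
    exact (hA.diff (F k).finite_toSet).nonempty
  let e : ℕ → Ordinal := fun k => sInf (A \ SetLike.coe (F k))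
  have hmem : ∀ k, e k ∈ A \ SetLike.coe (F k) := fun k => csInf_mem (hne k)
  have hFsucc : ∀ k, F (k+1) = insert (e k) (F k) := fun k => rfl
  have hsub : ∀ k, SetLike.coe (F k) ⊆ SetLike.coe (F (k+1)) := by
    intro k a ha
    rw [hFsucc]
    simp only [Finset.coe_insert, Set.mem_insert_iff]
    exact Or.inr ha
  refine ⟨e, strictMono_nat_of_lt_succ fun k => ?_, fun k => (hmem k).1⟩
  have h1 : e (k+1) ∈ A \ SetLike.coe (F k) := by
    have := hmem (k+1)
    exact ⟨this.1, fun hc => this.2 (hsub k hc)⟩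
  have hle : e k ≤ e (k+1) := csInf_le (OrderBot.bddBelow _) h1
  have hneq : e k ≠ e (k+1) := by
    intro hc
    apply (hmem (k+1)).2
    rw [hFsucc, ← hc]
    simp
  exact lt_of_le_of_ne hle hneq

theorem partI (n : ℕ) (hn : 1 ≤ n) (ρ : ℕ → Ordinal → Ordinal → Ordinal)
    (hρ : IsRhoSystem n ρ) :
    VeryLarge (omegaOrd n) {s | memBn n ρ s} := by
  classical
  intro A hAsub hAinf
  obtain ⟨e, he, heA⟩ := exists_strictMono_seq hAinf
  set M := 2 * n + 2 with hM
  -- the coloring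
  set tup : (Fin M → ℕ) → (ℕ → Ordinal) :=
    fun x j => if h : j < M then e (x ⟨j, h⟩) else 0 with htup
  set pick : (Fin M → ℕ) → (Fin (n+1) → Fin M) → (ℕ → Ordinal) :=
    fun x p j => if h : j < n+1 then e (x (p ⟨j, h⟩)) else 0 with hpick
  set c : (Fin M → ℕ) → (Fin n → Prop) × (((Fin (n+1) → Fin M) × (Fin (n+1) → Fin M)) → Prop) :=
    fun x => (fun i => fseq n ρ i (tup x) < fseq n ρ i (fun j => tup x (j+1)),
      fun pq => fseq n ρ n (pick x pq.1) = fseq n ρ n (pick x pq.2)) with hc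
  obtain ⟨q, -, hqinf, a, hom⟩ := ramseyTuples M c Set.univ Set.infinite_univ
  have hqinf' : (setOf fun k => k ∈ q).Infinite := hqinf
  set η : ℕ → ℕ := Nat.nth (fun k => k ∈ q) with hη
  have hηmono : StrictMono η := fun _ _ h => (Nat.nth_lt_nth hqinf').2 h
  have hηmem : ∀ k, η k ∈ q := fun k => Nat.nth_mem_of_infinite hqinf' k
  set ee : ℕ → Ordinal := fun k => e (η k) with hee
  have heemono : StrictMono ee := fun _ _ h => he (hηmono h)
  set A' : Set Ordinal := Set.range ee with hA'
  have hA'A : A' ⊆ A := by rintro _ ⟨k, rfl⟩; exact heA _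
  have hA'lt : ∀ b ∈ A', b < omegaOrd n := fun b hb => hAsub (hA'A hb)
  have heeA' : ∀ k, ee k ∈ A' := fun k => ⟨k, rfl⟩
  -- the homogeneity facts, componentwise
  have hom1 : ∀ x : Fin M → ℕ, (∀ j, x j ∈ q) → StrictMono x → ∀ i : Fin n,
      (fseq n ρ (i : ℕ) (tup x) < fseq n ρ (i : ℕ) (fun j => tup x (j+1))) = a.1 i := by
    intro x hx hmx i
    exact congrFun (congrArg Prod.fst (hom x hx hmx)) i
  have hom2 : ∀ x : Fin M → ℕ, (∀ j, x j ∈ q) → StrictMono x →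
      ∀ pq : (Fin (n+1) → Fin M) × (Fin (n+1) → Fin M),
      (fseq n ρ n (pick x pq.1) = fseq n ρ n (pick x pq.2)) = a.2 pq := by
    intro x hx hmx pq
    exact congrFun (congrArg Prod.snd (hom x hx hmx)) pq
  -- transfer: homogeneous color at level i gives shift-increase for all tuples from A'
  have transfer : ∀ i (hi : i < n), a.1 ⟨i, hi⟩ →
      ∀ v : ℕ → Ordinal, (∀ j, j ≤ i + 1 → v j ∈ A') → (∀ j, j < i + 1 → v j < v (j+1)) →
      fseq n ρ i v < fseq n ρ i (fun j => v (j+1)) := by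
    intro i hi hai v hvmem hvinc
    have hyex : ∀ j, j ≤ i + 1 → ∃ k, ee k = v j := fun j hj => hvmem j hj
    choose! y hy using hyex
    have hvmono : ∀ j j', j < j' → j' ≤ i+1 → v j < v j' := by
      intro j j' hjj' hj'
      induction j' with
      | zero => omega
      | succ j' IH =>
        rcases Nat.lt_or_ge j j' with h | h
        · exact lt_trans (IH h (by omega)) (hvinc j' (by omega))
        · have : j = j' := by omega
          subst this
          exact hvinc j (by omega)
    have hymono : ∀ j j', j < j' → j' ≤ i+1 → y j < y j' := by
      intro j j' h1 h2
      have := hvmono j j' h1 h2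
      rw [← hy j (by omega), ← hy j' h2] at this
      exact heemono.lt_iff_lt.mp this
    set x : Fin M → ℕ := fun j => if h : (j : ℕ) ≤ i + 1 then η (y j)
      else η (y (i+1) + ((j : ℕ) - (i+1))) with hx
    have hiM : i + 1 < M := by omega
    have hxmem : ∀ j, x j ∈ q := by
      intro j
      simp only [hx]
      split <;> exact hηmem _
    have hxmono : StrictMono x := by
      intro j j' hjj'
      simp only [hx]
      have hcoe : (j : ℕ) < (j' : ℕ) := hjj'
      split <;> split
      · exact hηmono (hymono _ _ hcoe (by omega))
      · apply hηmono
        rcases Nat.lt_or_ge (j : ℕ) (i+1) with h | h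
        · calc y j < y (i+1) := hymono _ _ h (le_refl _)
            _ < _ := by omega
        · have : (j : ℕ) = i + 1 := by omega
          rw [this]; omega
      · omega
      · apply hηmono; omega
    have htupv : ∀ j, j ≤ i → tup x j = v j := by
      intro j hj
      simp only [htup]
      rw [dif_pos (by omega : j < M)]
      have : x ⟨j, by omega⟩ = η (y j) := by
        simp only [hx]
        exact dif_pos (show ((⟨j, by omega⟩ : Fin M) : ℕ) ≤ i + 1 by exact (by omega : j ≤ i + 1))
      rw [this]
      exact hy j (by omega)
    have htupv' : ∀ j, j ≤ i → tup x (j+1) = v (j+1) := by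
      intro j hj
      simp only [htup]
      rw [dif_pos (by omega : j + 1 < M)]
      have : x ⟨j+1, by omega⟩ = η (y (j+1)) := by
        simp only [hx]
        exact dif_pos
          (show ((⟨j+1, by omega⟩ : Fin M) : ℕ) ≤ i + 1 by exact (by omega : j + 1 ≤ i + 1))
      rw [this]
      exact hy (j+1) (by omega)
    have h1 : fseq n ρ i (tup x) = fseq n ρ i v := fseq_congr n ρ i _ _ htupv
    have h2 : fseq n ρ i (fun j => tup x (j+1)) = fseq n ρ i (fun j => v (j+1)) :=
      fseq_congr n ρ i _ _ htupv'
    have := (hom1 x hxmem hxmono ⟨i, hi⟩) ▸ hai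
    rwa [h1, h2] at this
  -- the homogeneous colors at levels < n are all `true`
  have key : ∀ i (hi : i < n), a.1 ⟨i, hi⟩ := by
    intro i
    induction i using Nat.strong_induction_on with
    | _ i IH =>
      intro hi
      by_contra hnot
      -- the sliding windows
      set X : ℕ → (Fin M → ℕ) := fun k => fun j => η ((j : ℕ) + k) with hX
      have hXmem : ∀ k j, X k j ∈ q := fun k j => hηmem _
      have hXmono : ∀ k, StrictMono (X k) := by
        intro k j j' h
        exact hηmono (by have : (j:ℕ) < (j':ℕ) := h; omega)
      set W : ℕ → Ordinal := fun k => fseq n ρ i (tup (X k)) with hW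
      have hiM : i + 1 < M := by omega
      have hshift : ∀ k, fseq n ρ i (fun j => tup (X k) (j+1)) = W (k+1) := by
        intro k
        apply fseq_congr
        intro j hj
        simp only [htup, hX]
        rw [dif_pos (by omega : j + 1 < M), dif_pos (by omega : j < M)]
        show e (η (j + 1 + k)) = e (η (j + (k + 1)))
        rw [show j + 1 + k = j + (k + 1) from by omega]
      have hnlt : ∀ k, ¬ (W k < W (k+1)) := by
        intro k hlt
        apply hnot
        have := hom1 (X k) (hXmem k) (hXmono k) ⟨i, hi⟩
        rw [← this, hshift k]
        exact hlt
      have hne : ∀ k, W k ≠ W (k+1) := by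
        intro k
        rcases Nat.eq_zero_or_pos i with rfl | hipos
        · -- i = 0 : W is just the enumeration, strictly increasing
          exfalso
          apply hnlt k
          have hWv : ∀ l, W l = e (η ((0:ℕ) + l)) := by
            intro l
            show fseq n ρ 0 (tup (X l)) = _
            have h0 : fseq n ρ 0 (tup (X l)) = tup (X l) 0 := rfl
            rw [h0]
            simp only [htup, hX]
            rw [dif_pos (by omega : (0:ℕ) < M)]
          rw [hWv k, hWv (k+1)]
          exact he (hηmono (by omega))
        · -- i = i' + 1
          obtain ⟨i', rfl⟩ : ∃ i', i = i' + 1 := ⟨i - 1, by omega⟩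
          have hai' := IH i' (by omega) (by omega)
          set u : ℕ → Ordinal := fun k => fseq n ρ i' (tup (X k)) with hu
          have hulti : ∀ k, u k < u (k+1) := by
            intro k
            have := transfer i' (by omega) hai' (tup (X k)) ?_ ?_
            · have hsh : fseq n ρ i' (fun j => tup (X k) (j+1)) = u (k+1) := by
                apply fseq_congr
                intro j hj
                simp only [htup, hX]
                rw [dif_pos (by omega : j + 1 < M), dif_pos (by omega : j < M)]
                show e (η (j + 1 + k)) = e (η (j + (k + 1)))
                rw [show j + 1 + k = j + (k + 1) from by omega]
              rwa [hsh] at this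
            · intro j hj
              simp only [htup]
              rw [dif_pos (by omega : j < M)]
              exact heeA' _
            · intro j hj
              simp only [htup, hX]
              rw [dif_pos (by omega : j < M), dif_pos (by omega : j + 1 < M)]
              exact he (hηmono (Nat.add_lt_add_right (Nat.lt_succ_self j) k))
          have hWeq : ∀ k, W k = ρ (n - i') (u k) (u (k+1)) := by
            intro k
            have hsh : fseq n ρ i' (fun j => tup (X k) (j+1)) = u (k+1) := by
              apply fseq_congr
              intro j hj
              simp only [htup, hX]
              rw [dif_pos (by omega : j + 1 < M), dif_pos (by omega : j < M)]
              show e (η (j + 1 + k)) = e (η (j + (k + 1)))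
              rw [show j + 1 + k = j + (k + 1) from by omega]
            show fseq n ρ (i'+1) (tup (X k)) = _
            simp only [fseq]
            rw [hsh, if_neg (ne_of_lt (hulti k))]
          rw [hWeq k, hWeq (k+1)]
          have hbound : ∀ k, u k < omegaOrd (n - i') := by
            intro k
            apply fseq_bound hρ i' (by omega)
            intro j hj
            simp only [htup]
            rw [dif_pos (by omega : j < M)]
            exact hA'lt _ (heeA' _)
          exact (hρ (n - i') (by omega) (by omega)).2.2.2.2 _ _ _ (hulti k) (hulti (k+1))
            (hbound (k+2))
      have hdesc : ∀ k, W (k+1) < W k := fun k =>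
        lt_of_le_of_ne (not_lt.mp (hnlt k)) (Ne.symm (hne k))
      obtain ⟨m, ⟨k, rfl⟩, hmin⟩ := Ordinal.lt_wf.has_min (Set.range W) ⟨W 0, 0, rfl⟩
      exact hmin (W (k+1)) ⟨k+1, rfl⟩ (hdesc k)
  -- shift-increasing on A'
  have SIA' : ∀ i, i < n → ∀ v : ℕ → Ordinal,
      (∀ j, j ≤ i + 1 → v j ∈ A') → (∀ j, j < i + 1 → v j < v (j+1)) →
      fseq n ρ i v < fseq n ρ i (fun j => v (j+1)) :=
    fun i hi => transfer i hi (key i hi)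
  -- min-dependance on A'
  have hmono_of : ∀ (f : ℕ → Ordinal) (m : ℕ), (∀ j, j < m → f j < f (j+1)) →
      ∀ j j', j < j' → j' ≤ m → f j < f j' := by
    intro f m h j j' hjj' hj'
    induction j' with
    | zero => omega
    | succ j' IH =>
      rcases Nat.lt_or_ge j j' with hc | hc
      · exact lt_trans (IH hc (by omega)) (h j' (by omega))
      · have : j = j' := by omega
        subst this
        exact h j (by omega)
  have MDlt : ∀ v w : ℕ → Ordinal,
      (∀ j, j ≤ n → v j ∈ A') → (∀ j, j < n → v j < v (j+1)) →
      (∀ j, j ≤ n → w j ∈ A') → (∀ j, j < n → w j < w (j+1)) →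
      v 0 < w 0 → fseq n ρ n v ≠ fseq n ρ n w := by
    intro v w hv hvi hw hwi hlt heq
    have hyex : ∀ j, j ≤ n → ∃ k, ee k = v j := fun j hj => hv j hj
    have hzex : ∀ j, j ≤ n → ∃ k, ee k = w j := fun j hj => hw j hj
    choose! y hy using hyex
    choose! z hz using hzex
    have hymono : ∀ j j', j < j' → j' ≤ n → y j < y j' := by
      intro j j' h1 h2
      have := hmono_of v n hvi j j' h1 h2
      rw [← hy j (by omega), ← hy j' h2] at this
      exact heemono.lt_iff_lt.mp this
    have hzmono : ∀ j j', j < j' → j' ≤ n → z j < z j' := by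
      intro j j' h1 h2
      have := hmono_of w n hwi j j' h1 h2
      rw [← hz j (by omega), ← hz j' h2] at this
      exact heemono.lt_iff_lt.mp this
    have hy0z : ∀ j, j ≤ n → y 0 < z j := by
      intro j hj
      have h1 : v 0 < w j := by
        rcases Nat.eq_zero_or_pos j with rfl | hjp
        · exact hlt
        · exact lt_trans hlt (hmono_of w n hwi 0 j hjp hj)
      rw [← hy 0 (by omega), ← hz j hj] at h1
      exact heemono.lt_iff_lt.mp h1
    set u : Finset ℕ := ((Finset.range (n+1)).image y) ∪ ((Finset.range (n+1)).image z)
      with hu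
    have hyu : ∀ j, j ≤ n → y j ∈ u := by
      intro j hj
      rw [hu, Finset.mem_union]
      exact Or.inl (Finset.mem_image.mpr ⟨j, Finset.mem_range.mpr (by omega), rfl⟩)
    have hzu : ∀ j, j ≤ n → z j ∈ u := by
      intro j hj
      rw [hu, Finset.mem_union]
      exact Or.inr (Finset.mem_image.mpr ⟨j, Finset.mem_range.mpr (by omega), rfl⟩)
    have hune : u.Nonempty := ⟨y 0, hyu 0 (by omega)⟩
    have hmM : u.card ≤ M := by
      calc u.card ≤ ((Finset.range (n+1)).image y).card + ((Finset.range (n+1)).image z).card :=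
            Finset.card_union_le _ _
        _ ≤ (n+1) + (n+1) := by
            gcongr <;> exact le_trans (Finset.card_image_le) (by simp)
        _ ≤ M := by omega
    set m := u.card with hm
    set emb := u.orderEmbOfFin hm.symm with hembdef
    have hrange : ∀ b ∈ u, ∃ jj : Fin m, emb jj = b := by
      intro b hb
      have : b ∈ Set.range emb := by
        rw [hembdef, Finset.range_orderEmbOfFin]
        exact hb
      exact this
    have hp0ex : ∀ j, j ≤ n → ∃ jj : Fin m, emb jj = y j := fun j hj => hrange _ (hyu j hj)
    have hq0ex : ∀ j, j ≤ n → ∃ jj : Fin m, emb jj = z j := fun j hj => hrange _ (hzu j hj)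
    have hmpos : 0 < m := Finset.card_pos.mpr hune
    haveI : Nonempty (Fin m) := ⟨⟨0, hmpos⟩⟩
    choose! p0 hp0 using hp0ex
    choose! q0 hq0 using hq0ex
    set kk : Fin M → ℕ := fun j => if h : (j : ℕ) < m then emb ⟨j, h⟩
      else u.max' hune + 1 + j with hkk
    have hkkmono : StrictMono kk := by
      intro j j' hjj'
      have hcoe : (j : ℕ) < (j' : ℕ) := hjj'
      simp only [hkk]
      split <;> split
      · exact emb.strictMono (by simpa using hcoe)
      · calc emb ⟨j, by omega⟩ ≤ u.max' hune :=
              Finset.le_max' u _ (by rw [hembdef]; exact u.orderEmbOfFin_mem _ _)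
          _ < u.max' hune + 1 + j' := by omega
      · omega
      · omega
    set x : Fin M → ℕ := fun j => η (kk j) with hxdef
    have hxmem : ∀ j, x j ∈ q := fun j => hηmem _
    have hxmono : StrictMono x := fun _ _ h => hηmono (hkkmono h)
    set p : Fin (n+1) → Fin M := fun j => Fin.castLE hmM (p0 j) with hpdef
    set q' : Fin (n+1) → Fin M := fun j => Fin.castLE hmM (q0 j) with hq'def
    have hxp : ∀ j : Fin (n+1), x (p j) = η (y j) := by
      intro j
      simp only [hxdef, hpdef, hkk]
      rw [dif_pos (show ((Fin.castLE hmM (p0 (j:ℕ))) : ℕ) < m from (p0 (j:ℕ)).2)]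
      congr 1
      rw [← hp0 (j : ℕ) (by omega)]
      exact congrArg emb (Fin.ext rfl)
    have hxq : ∀ j : Fin (n+1), x (q' j) = η (z j) := by
      intro j
      simp only [hxdef, hq'def, hkk]
      rw [dif_pos (show ((Fin.castLE hmM (q0 (j:ℕ))) : ℕ) < m from (q0 (j:ℕ)).2)]
      congr 1
      rw [← hq0 (j : ℕ) (by omega)]
      exact congrArg emb (Fin.ext rfl)
    have hpmono : StrictMono p := by
      intro j j' hjj'
      have h1 : y (j : ℕ) < y (j' : ℕ) := hymono _ _ hjj' (by omega)
      rw [← hp0 (j : ℕ) (by omega), ← hp0 (j' : ℕ) (by omega)] at h1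
      have h2 : p0 (j : ℕ) < p0 (j' : ℕ) := emb.lt_iff_lt.mp h1
      simp only [hpdef]
      exact h2
    have hq'mono : StrictMono q' := by
      intro j j' hjj'
      have h1 : z (j : ℕ) < z (j' : ℕ) := hzmono _ _ hjj' (by omega)
      rw [← hq0 (j : ℕ) (by omega), ← hq0 (j' : ℕ) (by omega)] at h1
      have h2 : q0 (j : ℕ) < q0 (j' : ℕ) := emb.lt_iff_lt.mp h1
      simp only [hq'def]
      exact h2
    have hpickv : ∀ j, j ≤ n → pick x p j = v j := by
      intro j hj
      simp only [hpick]
      rw [dif_pos (by omega : j < n + 1), hxp ⟨j, by omega⟩]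
      exact hy j hj
    have hpickw : ∀ j, j ≤ n → pick x q' j = w j := by
      intro j hj
      simp only [hpick]
      rw [dif_pos (by omega : j < n + 1), hxq ⟨j, by omega⟩]
      exact hz j hj
    have ha2 : a.2 (p, q') := by
      rw [← hom2 x hxmem hxmono (p, q')]
      show fseq n ρ n (pick x p) = fseq n ρ n (pick x q')
      calc fseq n ρ n (pick x p) = fseq n ρ n v := fseq_congr n ρ n _ _ hpickv
        _ = fseq n ρ n w := heq
        _ = fseq n ρ n (pick x q') := (fseq_congr n ρ n _ _ hpickw).symm
    set P0 := p 0 with hP0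
    have hq'ne : ∀ j : Fin (n+1), q' j ≠ P0 := by
      intro j hc
      have h1 : x (q' j) = x P0 := by rw [hc]
      rw [hxq j, hP0, hxp 0] at h1
      have h2 : z (j : ℕ) = y 0 := hηmono.injective h1
      have := hy0z (j : ℕ) (by omega)
      omega
    have hpne : ∀ j : Fin (n+1), j ≠ 0 → p j ≠ P0 := by
      intro j hj hc
      exact hj (hpmono.injective hc)
    set xh : Fin M → ℕ := fun j => η (2 * (j : ℕ)) with hxh
    set xh' : Fin M → ℕ := fun j => if j = P0 then η (2 * (P0 : ℕ) + 1)
      else η (2 * (j : ℕ)) with hxh'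
    have hxhmono : StrictMono xh := by
      intro j j' h
      exact hηmono (by have : (j:ℕ) < (j':ℕ) := h; omega)
    have hxh'mono : StrictMono xh' := by
      intro j j' h
      have hco : (j:ℕ) < (j':ℕ) := h
      simp only [hxh']
      split <;> split
      · omega
      · next h1 h2 =>
          apply hηmono
          have : (P0 : ℕ) < (j' : ℕ) := by
            have : P0 < j' := lt_of_eq_of_lt h1.symm h
            exact this
          omega
      · next h1 h2 =>
          apply hηmono
          have : (j : ℕ) < (P0 : ℕ) := by
            have : j < P0 := lt_of_lt_of_eq h h2
            exact this
          omega
      · exact hηmono (by omega)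
    have hxhmem : ∀ j, xh j ∈ q := fun j => hηmem _
    have hxh'mem : ∀ j, xh' j ∈ q := by
      intro j
      simp only [hxh']
      split <;> exact hηmem _
    have E3 : fseq n ρ n (pick xh p) = fseq n ρ n (pick xh q') := by
      rw [hom2 xh hxhmem hxhmono (p, q')]
      exact ha2
    have E4 : fseq n ρ n (pick xh' p) = fseq n ρ n (pick xh' q') := by
      rw [hom2 xh' hxh'mem hxh'mono (p, q')]
      exact ha2
    have hqq : ∀ j, pick xh q' j = pick xh' q' j := by
      intro j
      simp only [hpick]
      by_cases h : j < n + 1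
      · rw [dif_pos h, dif_pos h]
        congr 1
        simp only [hxh', if_neg (hq'ne ⟨j, h⟩)]
        rfl
      · rw [dif_neg h, dif_neg h]
    have E : fseq n ρ n (pick xh p) = fseq n ρ n (pick xh' p) := by
      have hc2 : fseq n ρ n (pick xh q') = fseq n ρ n (pick xh' q') :=
        fseq_congr n ρ n _ _ (fun j _ => hqq j)
      rw [E3, hc2]
      exact E4.symm
    -- contradiction via head-injectivity
    have hxh'P0 : xh' P0 = η (2 * (P0 : ℕ) + 1) := by
      simp only [hxh']
      split
      · rfl
      · next h => exact absurd trivial (by simpa using h)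
    have hpj : ∀ j : Fin (n+1), j ≠ 0 → xh' (p j) = xh (p j) := by
      intro j hj
      simp only [hxh', hxh]
      split
      · next h => exact absurd h (hpne j hj)
      · rfl
    refine fseq_ne_of_head_ne hρ (pick xh p) (pick xh' p) ?_ ?_ ?_ ?_ ?_ ?_ E
    · intro j h1 h2
      simp only [hpick]
      rw [dif_pos (by omega : j < n+1), dif_pos (by omega : j < n+1),
        hpj ⟨j, by omega⟩ (by simp [Fin.ext_iff]; omega)]
    · simp only [hpick]
      rw [dif_pos (by omega : (0:ℕ) < n+1), dif_pos (by omega : (0:ℕ) < n+1)]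
      have hP0eq : p ⟨0, by omega⟩ = P0 := rfl
      rw [hP0eq, hxh'P0]
      intro hc
      have := (he.injective hc)
      have := hηmono.injective this
      omega
    · intro j hj
      simp only [hpick]
      rw [dif_pos (by omega : j < n+1)]
      exact hAsub (heA _)
    · intro j hj
      simp only [hpick]
      rw [dif_pos (by omega : j < n+1)]
      simp only [hxh']
      split <;> exact hAsub (heA _)
    · intro i hi
      refine SIA' i hi _ ?_ ?_
      · intro j hj
        simp only [hpick]
        rw [dif_pos (by omega : j < n+1)]
        exact heeA' _
      · intro j hj
        simp only [hpick]
        rw [dif_pos (by omega : j < n+1), dif_pos (by omega : j+1 < n+1)]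
        exact he (hxhmono (hpmono (show (⟨j, by omega⟩ : Fin (n+1)) < ⟨j+1, by omega⟩
          from by simp [Fin.lt_def])))
    · intro i hi
      refine SIA' i hi _ ?_ ?_
      · intro j hj
        simp only [hpick]
        rw [dif_pos (by omega : j < n+1)]
        simp only [hxh']
        split <;> exact heeA' _
      · intro j hj
        simp only [hpick]
        rw [dif_pos (by omega : j < n+1), dif_pos (by omega : j+1 < n+1)]
        exact he (hxh'mono (hpmono (show (⟨j, by omega⟩ : Fin (n+1)) < ⟨j+1, by omega⟩
          from by simp [Fin.lt_def])))
  have MD : ∀ v w : ℕ → Ordinal,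
      (∀ j, j ≤ n → v j ∈ A') → (∀ j, j < n → v j < v (j+1)) →
      (∀ j, j ≤ n → w j ∈ A') → (∀ j, j < n → w j < w (j+1)) →
      fseq n ρ n v = fseq n ρ n w → v 0 = w 0 := by
    intro v w hv hvi hw hwi heq
    rcases lt_trichotomy (v 0) (w 0) with h | h | h
    · exact absurd heq (MDlt v w hv hvi hw hwi h)
    · exact h
    · exact absurd heq.symm (MDlt w v hw hwi hv hvi h)
  -- conclude
  refine ⟨A', hA'A, ?_, ?_⟩
  · exact Set.infinite_range_of_injective heemono.injective
  · intro s hsA'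
    refine ⟨fun b hb => hA'lt b (hsA' hb), ?_, ?_⟩
    · intro v w hv hvi hw hwi heq
      exact MD v w (fun j hj => hsA' (hv j hj)) hvi (fun j hj => hsA' (hw j hj)) hwi heq
    · intro i hi v hv hvi
      exact SIA' i hi v (fun j hj => hsA' (hv j hj)) hvi

theorem partII (n : ℕ) (hn : 1 ≤ n) (ρ : ℕ → Ordinal → Ordinal → Ordinal)
    (hρ : IsRhoSystem n ρ) :
    ∀ s t : Finset Ordinal, memBn n ρ s → memBn n ρ t → s ≠ t → s.card = t.card →
      (∀ g : ℕ → ℕ, (∀ j, j < n → g j < g (j + 1)) → g n < s.card →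
        fseq n ρ n (fun j => enumOf s (g j)) = fseq n ρ n (fun j => enumOf t (g j))) →
      DeltaPos (2 * n - 1) s t := by
  intro s t hs ht hst hcard hagree
  classical
  set N := s.card with hN
  have htcard : t.card = N := hcard.symm
  -- the divergence point K
  have hD : {j | j < N ∧ enumOf s j ≠ enumOf t j}.Nonempty := by
    by_contra h
    rw [Set.not_nonempty_iff_eq_empty] at h
    apply hst
    apply eq_of_enumOf_eq hcard
    intro j hj
    by_contra hne
    have hmem : j ∈ {j | j < N ∧ enumOf s j ≠ enumOf t j} := ⟨hj, hne⟩
    rw [h] at hmem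
    exact Set.notMem_empty j hmem
  set K := sInf {j | j < N ∧ enumOf s j ≠ enumOf t j} with hKdef
  have hKmem : K < N ∧ enumOf s K ≠ enumOf t K := Nat.sInf_mem hD
  have hKlt : K < N := hKmem.1
  have hKne : enumOf s K ≠ enumOf t K := hKmem.2
  have hKpre : ∀ j, j < K → enumOf s j = enumOf t j := by
    intro j hj
    have := Nat.notMem_of_lt_sInf (hKdef ▸ hj)
    by_contra hne
    exact this ⟨by omega, hne⟩
  -- Claim 1: few positions above K where the enumerations agree
  set P : Finset ℕ := (Finset.range N).filter
    (fun p => K < p ∧ enumOf s p = enumOf t p) with hPdef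
  have hPmem : ∀ p ∈ P, p < N ∧ K < p ∧ enumOf s p = enumOf t p := by
    intro p hp
    rw [hPdef, Finset.mem_filter, Finset.mem_range] at hp
    exact ⟨hp.1, hp.2⟩
  have hPcard : P.card < n := by
    by_contra hc
    push_neg at hc
    obtain ⟨Q, hQP, hQcard⟩ := Finset.exists_subset_card_eq hc
    set emb := Q.orderEmbOfFin hQcard with hemb
    have hQmem : ∀ j : Fin n, emb j ∈ Q := fun j => Q.orderEmbOfFin_mem hQcard j
    have hQP' : ∀ j : Fin n, emb j < N ∧ K < emb j ∧
        enumOf s (emb j) = enumOf t (emb j) := fun j => hPmem _ (hQP (hQmem j))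
    set g : ℕ → ℕ := fun j => if j = 0 then K else if h : j - 1 < n then emb ⟨j-1, h⟩
      else N + j with hgdef
    have hg0 : g 0 = K := rfl
    have hgj : ∀ j, 1 ≤ j → j ≤ n → ∃ h : j - 1 < n, g j = emb ⟨j-1, h⟩ := by
      intro j h1 h2
      refine ⟨by omega, ?_⟩
      simp only [hgdef]
      rw [if_neg (by omega), dif_pos]
    have hgN : ∀ j, j ≤ n → g j < N := by
      intro j hj
      rcases Nat.eq_zero_or_pos j with rfl | hj1
      · rw [hg0]; exact hKlt
      · obtain ⟨h, he⟩ := hgj j hj1 hj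
        rw [he]; exact (hQP' _).1
    have hginc : ∀ j, j < n → g j < g (j+1) := by
      intro j hj
      rcases Nat.eq_zero_or_pos j with rfl | hj1
      · obtain ⟨h, he⟩ := hgj 1 le_rfl (by omega)
        rw [hg0, he]
        exact (hQP' _).2.1
      · obtain ⟨h, he⟩ := hgj j hj1 (by omega)
        obtain ⟨h', he'⟩ := hgj (j+1) (by omega) (by omega)
        rw [he, he']
        exact emb.strictMono (by simp [Fin.lt_def]; omega)
    have happly := hagree g hginc (hgN n le_rfl)
    set v : ℕ → Ordinal := fun j => enumOf s (g j) with hvdef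
    set w : ℕ → Ordinal := fun j => enumOf t (g j) with hwdef
    have hvwag : ∀ j, 1 ≤ j → j ≤ n → v j = w j := by
      intro j h1 h2
      obtain ⟨h, he⟩ := hgj j h1 h2
      simp only [hvdef, hwdef, he]
      exact (hQP' _).2.2
    have hvinc : ∀ j, j < n → v j < v (j+1) := fun j hj =>
      enumOf_lt_enumOf (hginc j hj) (hgN (j+1) (by omega))
    have hwinc : ∀ j, j < n → w j < w (j+1) := fun j hj => by
      have := hgN (j+1) (by omega)
      exact enumOf_lt_enumOf (hginc j hj) (by omega)
    refine fseq_ne_of_head_ne hρ v w hvwag ?_ ?_ ?_ ?_ ?_ happly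
    · simp only [hvdef, hwdef, hg0]; exact hKne
    · intro j hj; exact hs.1 _ (enumOf_mem (hgN j hj))
    · intro j hj
      refine ht.1 _ (enumOf_mem ?_)
      have := hgN j hj; omega
    · intro i hi
      exact hs.2.2 i hi v (fun j hj => enumOf_mem (hgN j (by omega)))
        (fun j hj => hvinc j (by omega))
    · intro i hi
      exact ht.2.2 i hi w (fun j hj => by
          have := hgN j (by omega); exact enumOf_mem (by omega))
        (fun j hj => hwinc j (by omega))
  -- Claim 2: few common elements sitting at different positions
  set R : Finset Ordinal := (s ∩ t).filter
    (fun a => ¬ ∃ j, j < N ∧ enumOf s j = a ∧ enumOf t j = a) with hRdef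
  have hRcard : R.card ≤ n := by
    by_contra hc
    push_neg at hc
    obtain ⟨Q, hQR, hQcard⟩ := Finset.exists_subset_card_eq hc
    set emb := Q.orderEmbOfFin hQcard with hemb
    have hQmem : ∀ j : Fin (n+1), emb j ∈ Q := fun j => Q.orderEmbOfFin_mem hQcard j
    have hQst : ∀ j : Fin (n+1), emb j ∈ s ∩ t := by
      intro j
      have := hQR (hQmem j)
      rw [hRdef, Finset.mem_filter] at this
      exact this.1
    set v : ℕ → Ordinal := fun j => if h : j < n+1 then emb ⟨j, h⟩ else 0 with hvdef
    have hvmem : ∀ j, j ≤ n → v j ∈ s ∩ t := by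
      intro j hj
      simp only [hvdef, dif_pos (by omega : j < n+1)]
      exact hQst _
    have hvinc : ∀ j, j < n → v j < v (j+1) := by
      intro j hj
      simp only [hvdef, dif_pos (by omega : j < n+1), dif_pos (by omega : j+1 < n+1)]
      exact emb.strictMono (by simp [Fin.lt_def])
    -- positions in s
    have hpos : ∀ j, j ≤ n → ∃ p, p < N ∧ enumOf s p = v j := by
      intro j hj
      exact exists_enumOf (Finset.mem_inter.mp (hvmem j hj)).1
    choose! p hp1 hp2 using hpos
    set g : ℕ → ℕ := fun j => if j ≤ n then p j else N + j with hgdef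
    have hgeq : ∀ j, j ≤ n → g j = p j := fun j hj => by simp [hgdef, hj]
    have hgN : ∀ j, j ≤ n → g j < N := fun j hj => by rw [hgeq j hj]; exact hp1 j hj
    have hpinc : ∀ j k, j < k → k ≤ n → p j < p k := by
      intro j k hjk hk
      have hvjk : v j < v k := by
        simp only [hvdef, dif_pos (by omega : j < n+1), dif_pos (by omega : k < n+1)]
        exact emb.strictMono (by simp [Fin.lt_def]; omega)
      by_contra h
      rcases lt_or_eq_of_le (not_lt.mp h) with h' | h'
      · have := enumOf_lt_enumOf h' (hp1 j (by omega))
        rw [hp2 j (by omega), hp2 k hk] at this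
        exact absurd hvjk (not_lt.mpr (le_of_lt this))
      · have e1 := hp2 j (by omega)
        have e2 := hp2 k hk
        rw [h', e1] at e2
        exact (ne_of_lt hvjk) e2
    have hginc : ∀ j, j < n → g j < g (j+1) := by
      intro j hj
      rw [hgeq j (by omega), hgeq (j+1) (by omega)]
      exact hpinc j (j+1) (by omega) (by omega)
    have happly := hagree g hginc (hgN n le_rfl)
    have hvg : fseq n ρ n (fun j => enumOf s (g j)) = fseq n ρ n v := by
      apply fseq_congr
      intro j hj
      rw [hgeq j hj]
      exact hp2 j hj
    set w : ℕ → Ordinal := fun j => enumOf t (g j) with hwdef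
    have hmin := ht.2.1 v w
      (fun j hj => (Finset.mem_inter.mp (hvmem j hj)).2)
      (fun j hj => hvinc j hj)
      (fun j hj => by
        have := hgN j hj
        exact enumOf_mem (by omega))
      (fun j hj => by
        have := hgN (j+1) (by omega)
        exact enumOf_lt_enumOf (hginc j hj) (by omega))
      (by rw [← hvg, happly])
    -- v 0 has equal positions, contradiction with v 0 ∈ R
    have hv0R : v 0 ∈ R := hQR (by
      have : v 0 = emb ⟨0, by omega⟩ := by simp [hvdef]
      rw [this]; exact hQmem _)
    rw [hRdef, Finset.mem_filter] at hv0R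
    exact hv0R.2 ⟨g 0, hgN 0 (by omega), by rw [hgeq 0 (by omega)]; exact hp2 0 (by omega),
      hmin.symm⟩
  -- assemble
  set I : Finset Ordinal := (Finset.range K).image (enumOf s) with hIdef
  have hIst : I ⊆ s ∩ t := by
    intro a ha
    rw [hIdef, Finset.mem_image] at ha
    obtain ⟨j, hj, rfl⟩ := ha
    rw [Finset.mem_range] at hj
    rw [Finset.mem_inter]
    refine ⟨enumOf_mem (by omega), ?_⟩
    rw [hKpre j hj]
    exact enumOf_mem (by omega)
  set J : Finset Ordinal := (s ∩ t) \ I with hJdef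
  -- key: an element of s not in I has position ≥ K
  have hposge : ∀ a ∈ s, a ∉ I → ∀ j, j < N → enumOf s j = a → K ≤ j := by
    intro a ha haI j hj hje
    by_contra h
    exact haI (by
      rw [hIdef, Finset.mem_image]
      exact ⟨j, Finset.mem_range.mpr (by omega), hje⟩)
  have hpostge : ∀ a ∈ t, a ∉ I → ∀ j, j < N → enumOf t j = a → K ≤ j := by
    intro a ha haI j hj hje
    by_contra h
    exact haI (by
      rw [hIdef, Finset.mem_image]
      exact ⟨j, Finset.mem_range.mpr (by omega), by rw [hKpre j (by omega)]; exact hje⟩)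
  have hIltJ : BlkLt I J := by
    intro a ha b hb
    rw [hIdef, Finset.mem_image] at ha
    obtain ⟨j, hj, rfl⟩ := ha
    rw [Finset.mem_range] at hj
    rw [hJdef, Finset.mem_sdiff] at hb
    obtain ⟨q, hq, hqe⟩ := exists_enumOf (Finset.mem_inter.mp hb.1).1
    have := hposge b (Finset.mem_inter.mp hb.1).1 hb.2 q (by omega) hqe
    rw [← hqe]
    exact enumOf_lt_enumOf (by omega) (by omega)
  -- card J bound
  have hJcard : J.card ≤ 2 * n - 1 := by
    set Jeq : Finset Ordinal := J.filter
      (fun a => ∃ j, j < N ∧ enumOf s j = a ∧ enumOf t j = a) with hJeqdef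
    set Jne : Finset Ordinal := J.filter
      (fun a => ¬ ∃ j, j < N ∧ enumOf s j = a ∧ enumOf t j = a) with hJnedef
    have hsplit : J = Jeq ∪ Jne := by
      rw [hJeqdef, hJnedef]
      rw [Finset.filter_union_filter_not_eq]
    have hJne : Jne.card ≤ n := by
      refine le_trans (Finset.card_le_card ?_) hRcard
      intro a ha
      rw [hJnedef, Finset.mem_filter] at ha
      rw [hRdef, Finset.mem_filter]
      refine ⟨?_, ha.2⟩
      have := ha.1
      rw [hJdef, Finset.mem_sdiff] at this
      exact this.1
    have hJeq : Jeq.card ≤ P.card := by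
      set f : Ordinal → ℕ := fun a => sInf {j | j < N ∧ enumOf s j = a ∧ enumOf t j = a}
        with hfdef
      have hfmem : ∀ a ∈ Jeq, f a < N ∧ enumOf s (f a) = a ∧ enumOf t (f a) = a := by
        intro a ha
        rw [hJeqdef, Finset.mem_filter] at ha
        exact Nat.sInf_mem ha.2
      refine Finset.card_le_card_of_injOn f ?_ ?_
      · intro a ha
        obtain ⟨h1, h2, h3⟩ := hfmem a ha
        rw [hPdef, Finset.mem_coe, Finset.mem_filter, Finset.mem_range]
        refine ⟨h1, ?_, by rw [h2, h3]⟩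
        -- K < f a
        have haJ : a ∈ J := by
          rw [hJeqdef, Finset.mem_coe, Finset.mem_filter] at ha; exact ha.1
        rw [hJdef, Finset.mem_sdiff] at haJ
        have hge := hposge a (Finset.mem_inter.mp haJ.1).1 haJ.2 (f a) h1 h2
        rcases lt_or_eq_of_le hge with h | h
        · exact h
        · exfalso; apply hKne; rw [← h] at h2 h3; rw [h2, h3]
      · intro a ha b hb hab
        have h2a := (hfmem a ha).2.1
        have h2b := (hfmem b hb).2.1
        rw [← h2a, ← h2b, hab]
    calc J.card ≤ Jeq.card + Jne.card := by rw [hsplit]; exact Finset.card_union_le _ _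
      _ ≤ 2 * n - 1 := by omega
  -- final
  refine ⟨I, J, hIst, (hJdef ▸ Finset.sdiff_subset), hIltJ, ?_, hJcard, ?_, ?_⟩
  · rw [hJdef, Finset.union_sdiff_of_subset hIst]
  · refine ⟨fun a ha => (Finset.mem_inter.mp (hIst ha)).1, ?_⟩
    intro a ha b hb
    rw [hIdef, Finset.mem_image] at ha
    obtain ⟨j, hj, rfl⟩ := ha
    rw [Finset.mem_range] at hj
    rw [Finset.mem_sdiff] at hb
    obtain ⟨q, hq, hqe⟩ := exists_enumOf hb.1
    have := hposge b hb.1 hb.2 q (by omega) hqe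
    rw [← hqe]
    exact enumOf_lt_enumOf (by omega) (by omega)
  · refine ⟨fun a ha => (Finset.mem_inter.mp (hIst ha)).2, ?_⟩
    intro a ha b hb
    rw [hIdef, Finset.mem_image] at ha
    obtain ⟨j, hj, rfl⟩ := ha
    rw [Finset.mem_range] at hj
    rw [Finset.mem_sdiff] at hb
    obtain ⟨q, hq, hqe⟩ := exists_enumOf hb.1
    have hq' : q < N := by omega
    have := hpostge b hb.1 hb.2 q hq' hqe
    rw [← hqe, hKpre j hj]
    exact enumOf_lt_enumOf (by omega) (by omega)

end AuxStmt7

/-- The family `B_n` is very-large, and any two distinct members of `B_n` of the same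
cardinality on which `f_n` agrees on corresponding `(n+1)`-subsets are in
`(2n-1)`-Δ-position. -/
theorem stmt7 (n : ℕ) (hn : 1 ≤ n) (ρ : ℕ → Ordinal → Ordinal → Ordinal)
    (hρ : IsRhoSystem n ρ) :
    VeryLarge (omegaOrd n) {s | memBn n ρ s} ∧
    ∀ s t : Finset Ordinal, memBn n ρ s → memBn n ρ t → s ≠ t → s.card = t.card →
      (∀ g : ℕ → ℕ, (∀ j, j < n → g j < g (j + 1)) → g n < s.card →
        fseq n ρ n (fun j => enumOf s (g j)) = fseq n ρ n (fun j => enumOf t (g j))) →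
      DeltaPos (2 * n - 1) s t :=
  ⟨partI n hn ρ hρ, partII n hn ρ hρ⟩
end

section
/- Let κ be an uncountable regular cardinal, let B be a hereditary family of finite subsets of κ that is large (for every infinite A ⊆ κ and every n ∈ ℕ some n-element subset of A belongs to B), and let 0 < θ < 1. Then: (i) for every n ∈ ℕ Player I has a winning strategy in the (B,n)-game, i.e., there is σ mapping finite subsets of κ to κ with max(s) < σ(s) for nonempty s such that for all η_0 < … < η_{n−2} < κ with σ(∅) < η_0 and σ({η_0,…,η_{i−1}}) < η_i for each i, the set {σ(∅), σ({η_0}), …, σ({η_0,…,η_{n−2}})} ∈ B; and (ii) if ‖·‖ is a norm on c₀₀(κ) satisfying the Tsirelson implicit equation ‖x‖ = max{ ‖x‖_∞, sup{ θ·Σ_{i<d} ‖x·1_{E_i}‖ : (E_i)_{i<d} a B-admissible block sequence of finite subsets of κ } } for every x ∈ c₀₀(κ), then there is a set C ⊆ κ of cardinality κ such that the unit vectors (u_γ)_{γ∈C} are θ^{-1}-equivalent to the unit basis of ℓ₁(κ): θ·Σ_{γ∈s} |a_γ| ≤ ‖Σ_{γ∈s} a_γ u_γ‖ ≤ Σ_{γ∈s}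 |a_γ| for every finite s ⊆ C and all scalars (a_γ)_{γ∈s}. -/
open scoped Classical

/-- A block sequence `(E_i)_{i<d}` of finite subsets of a linearly ordered index type
is `B`-admissible: there is `{γ_0 < … < γ_{d-1}} ∈ B` with `γ_0 ≤ min E_0` and
`max E_i < γ_{i+1} ≤ min E_{i+1}` for every `i < d - 1`. -/
def AdmissibleI {ι : Type*} [LinearOrder ι] (B : Set (Finset ι))
    (E : ℕ → Finset ι) (d : ℕ) : Prop :=
  ∃ g : ℕ → ι,
    (Finset.range d).image g ∈ B ∧
    (∀ i, i + 1 < d → g i < g (i + 1)) ∧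
    (0 < d → ∀ a ∈ E 0, g 0 ≤ a) ∧
    (∀ i, i + 1 < d → (∀ a ∈ E i, a < g (i + 1)) ∧ (∀ a ∈ E (i + 1), g (i + 1) ≤ a))

/-- The sup norm of a finitely supported function. -/
noncomputable def supNorm {ι : Type*} (x : ι →₀ ℝ) : ℝ :=
  sSup (Set.range fun γ => |x γ|)

namespace Stmt19Aux
variable {ι : Type*} [LinearOrder ι]

def subF (F : Set (Finset ι)) (γ : ι) : Set (Finset ι) := {t | insert γ t ∈ F}

def Win : ℕ → Set (Finset ι) → ι → Prop
  | 0, F, _ => ∅ ∈ F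
  | m+1, F, δ => ∃ γ, δ < γ ∧ ∀ η, γ < η → Win m (subF F γ) η

lemma win_succ_iff {m : ℕ} {F : Set (Finset ι)} {δ : ι} :
    Win (m+1) F δ ↔ ∃ γ, δ < γ ∧ ∀ η, γ < η → Win m (subF F γ) η := Iff.rfl

lemma win_zero_iff {F : Set (Finset ι)} {δ : ι} : Win 0 F δ ↔ ∅ ∈ F := Iff.rfl

lemma exists_gt_finset [Nonempty ι] (hnm : ∀ x : ι, ∃ y, x < y) (T : Finset ι) :
    ∃ y, ∀ a ∈ T, a < y := by
  rcases T.eq_empty_or_nonempty with h | h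
  · exact ⟨Classical.arbitrary ι, by simp [h]⟩
  · obtain ⟨y, hy⟩ := hnm (T.max' h)
    exact ⟨y, fun a ha => lt_of_le_of_lt (T.le_max' a ha) hy⟩

lemma winOfLarge [Nonempty ι] (hnm : ∀ x : ι, ∃ y, x < y) (B : Set (Finset ι))
    (hL : ∀ A : Set ι, A.Infinite → ∀ n : ℕ, ∃ s ∈ B, ↑s ⊆ A ∧ s.card = n) :
    ∀ (n : ℕ) (δ : ι), Win n B δ := by
  intro n δ0
  by_contra hW
  let famP : Finset ι → Set (Finset ι) := fun p => {t | t ∪ p ∈ B}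
  let respP : Finset ι → Prop :=
    fun p => ∃ η, (∀ a ∈ p, a < η) ∧ ¬ Win (n - p.card) (famP p) η
  let resp : Finset ι → ι := fun p => if h : respP p then h.choose else Classical.arbitrary ι
  have resp_spec : ∀ p, respP p →
      (∀ a ∈ p, a < resp p) ∧ ¬ Win (n - p.card) (famP p) (resp p) := by
    intro p h
    simp only [resp, dif_pos h]
    exact h.choose_spec
  let nxt : Finset ι → ι := fun T => (exists_gt_finset hnm (T ∪ T.powerset.image resp)).choose
  have nxt_spec : ∀ T, ∀ a ∈ T ∪ T.powerset.image resp, a < nxt T :=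
    fun T => (exists_gt_finset hnm _).choose_spec
  have nxt_gt_mem : ∀ T, ∀ a ∈ T, a < nxt T :=
    fun T a ha => nxt_spec T a (Finset.mem_union_left _ ha)
  have nxt_gt_resp : ∀ T p, p ⊆ T → resp p < nxt T := fun T p hp =>
    nxt_spec T _ (Finset.mem_union_right _
      (Finset.mem_image_of_mem _ (Finset.mem_powerset.2 hp)))
  let D : ℕ → Finset ι := fun k => Nat.rec ∅ (fun _ Dk => insert (nxt Dk) Dk) k
  have hDs : ∀ k, D (k+1) = insert (nxt (D k)) (D k) := fun k => rfl
  let d : ℕ → ι := fun k => nxt (D k)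
  have hDmono : ∀ k l, k ≤ l → D k ⊆ D l := by
    intro k l hkl
    induction l with
    | zero => simp_all
    | succ l ih =>
      rcases Nat.lt_or_ge k (l+1) with h | h
      · exact (ih (by omega)).trans (by rw [hDs]; exact Finset.subset_insert _ _)
      · have : k = l + 1 := by omega
        subst this; rfl
  have hdmem : ∀ j k, j < k → d j ∈ D k := by
    intro j k hjk
    exact hDmono (j+1) k hjk (by rw [hDs]; exact Finset.mem_insert_self _ _)
  have hdlt : ∀ j k, j < k → d j < d k := fun j k h => nxt_gt_mem (D k) _ (hdmem j k h)
  have inv : ∀ k, ∀ p, p ⊆ D k → p.card ≤ n → respP p := by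
    intro k
    induction k with
    | zero =>
      intro p hp _
      have hpe : p = ∅ := Finset.subset_empty.mp hp
      subst hpe
      refine ⟨δ0, by simp, ?_⟩
      have : famP ∅ = B := by ext t; simp [famP]
      simpa [this] using hW
    | succ k ih =>
      intro p hp hcard
      rw [hDs] at hp
      by_cases hdk : d k ∈ p
      · set q := p.erase (d k) with hq
        have hqsub : q ⊆ D k := by
          intro a ha
          rcases Finset.mem_erase.mp ha with ⟨hne, hap⟩
          rcases Finset.mem_insert.mp (hp hap) with h | h
          · exact absurd h hne
          · exact h
        have hqc : q.card + 1 = p.card := Finset.card_erase_add_one hdk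
        have hrq := resp_spec q (ih q hqsub (by omega))
        have hwq : ¬ Win (n - q.card) (famP q) (resp q) := hrq.2
        have hnq : n - q.card = (n - p.card) + 1 := by omega
        rw [hnq, win_succ_iff] at hwq
        push_neg at hwq
        obtain ⟨η, hη1, hη2⟩ := hwq (d k) (nxt_gt_resp (D k) q hqsub)
        have hpq : p = insert (d k) q := (Finset.insert_erase hdk).symm
        have hsetq : ∀ t : Finset ι, insert (d k) t ∪ q = t ∪ insert (d k) q := by
          intro t
          ext a
          simp only [Finset.mem_union, Finset.mem_insert]
          tauto
        have hsub : subF (famP q) (d k) = famP p := by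
          ext t
          simp only [subF, famP, Set.mem_setOf_eq, hpq, hsetq]
        rw [hsub] at hη2
        refine ⟨η, ?_, hη2⟩
        intro a ha
        rcases eq_or_ne a (d k) with h | h
        · exact h ▸ hη1
        · exact lt_trans (nxt_gt_mem (D k) a (hqsub (Finset.mem_erase.mpr ⟨h, ha⟩))) hη1
      · refine ih p ?_ hcard
        intro a ha
        rcases Finset.mem_insert.mp (hp ha) with h | h
        · rw [h] at ha; exact absurd ha hdk
        · exact h
  have hinj : Function.Injective d := (strictMono_nat_of_lt_succ
    (fun k => hdlt k (k+1) (by omega))).injective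
  obtain ⟨s, hsB, hsub, hcard⟩ := hL (Set.range d) (Set.infinite_range_of_injective hinj) n
  have hKex : ∀ t : Finset ι, ↑t ⊆ Set.range d → ∃ K, t ⊆ D K := by
    intro t
    induction t using Finset.induction_on with
    | empty => exact fun _ => ⟨0, by simp⟩
    | insert _ _ hnotmem ih =>
      rename_i a t
      intro ht
      obtain ⟨K, hK⟩ := ih (by
        intro x hx
        exact ht (by simp [hx]))
      have ha : a ∈ Set.range d := ht (by simp)
      obtain ⟨j, hj⟩ := ha
      have h2 : a ∈ D (j+1) := by rw [← hj]; exact hdmem j (j+1) (by omega)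
      exact ⟨max (j+1) K, Finset.insert_subset
        (hDmono (j+1) _ (le_max_left _ _) h2)
        (hK.trans (hDmono _ _ (le_max_right _ _)))⟩
  obtain ⟨K, hK⟩ := hKex s hsub
  have hs := (resp_spec s (inv K s hK (le_of_eq hcard))).2
  rw [hcard, Nat.sub_self, win_zero_iff] at hs
  exact hs (by simpa [famP] using hsB)

end Stmt19Aux

namespace Stmt19Aux
variable {ι : Type*} [LinearOrder ι] [Nonempty ι]
set_option linter.unusedSectionVars false

noncomputable def pick (hnm : ∀ x : ι, ∃ y, x < y) (m : ℕ) (F : Set (Finset ι)) (δ : ι) : ι :=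
  if h : ∃ γ, δ < γ ∧ ∀ η, γ < η → Win m (subF F γ) η then h.choose else (hnm δ).choose

lemma pick_gt (hnm : ∀ x : ι, ∃ y, x < y) (m : ℕ) (F : Set (Finset ι)) (δ : ι) :
    δ < pick hnm m F δ := by
  unfold pick
  split_ifs with h
  · exact h.choose_spec.1
  · exact (hnm δ).choose_spec

lemma pick_spec (hnm : ∀ x : ι, ∃ y, x < y) {m : ℕ} {F : Set (Finset ι)} {δ : ι}
    (hw : Win (m+1) F δ) :
    ∀ η, pick hnm m F δ < η → Win m (subF F (pick hnm m F δ)) η := by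
  have h : ∃ γ, δ < γ ∧ ∀ η, γ < η → Win m (subF F γ) η := hw
  simp only [pick, dif_pos h]
  exact h.choose_spec.2

noncomputable def go (hnm : ∀ x : ι, ∃ y, x < y) : List ι → ℕ → Set (Finset ι) → ι → ι
  | [], m, F, δ => pick hnm m F δ
  | η :: l, m, F, δ => go hnm l (m-1) (subF F (pick hnm m F δ)) η

lemma go_nil (hnm : ∀ x : ι, ∃ y, x < y) (m : ℕ) (F : Set (Finset ι)) (δ : ι) :
    go hnm [] m F δ = pick hnm m F δ := rfl

lemma go_cons (hnm : ∀ x : ι, ∃ y, x < y) (η : ι) (l : List ι) (m : ℕ)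
    (F : Set (Finset ι)) (δ : ι) :
    go hnm (η :: l) m F δ = go hnm l (m-1) (subF F (pick hnm m F δ)) η := rfl

lemma go_gt_getLast (hnm : ∀ x : ι, ∃ y, x < y) :
    ∀ (l : List ι) (hl : l ≠ []) (m : ℕ) (F : Set (Finset ι)) (δ : ι),
      l.getLast hl < go hnm l m F δ := by
  intro l
  induction l with
  | nil => intro hl; exact absurd rfl hl
  | cons η l ih =>
    intro hl m F δ
    cases l with
    | nil =>
      simp only [List.getLast_singleton, go_cons, go_nil]
      exact pick_gt hnm _ _ _
    | cons η' l' =>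
      rw [List.getLast_cons (by simp), go_cons]
      exact ih (by simp) (m-1) _ η

lemma sorted_le_getLast {l : List ι} (hs : l.Pairwise (· ≤ ·)) {a : ι} (ha : a ∈ l)
    (hl : l ≠ []) : a ≤ l.getLast hl := by
  induction l with
  | nil => cases ha
  | cons η l ih =>
    rw [List.pairwise_cons] at hs
    cases l with
    | nil =>
      simp only [List.mem_singleton] at ha
      simp [ha, List.getLast_singleton]
    | cons η' l' =>
      rw [List.getLast_cons (by simp)]
      rcases List.mem_cons.mp ha with h | h
      · subst h
        exact hs.1 _ (List.getLast_mem _)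
      · exact ih hs.2 h (by simp)

lemma main_go (hnm : ∀ x : ι, ∃ y, x < y) :
    ∀ (m : ℕ) (F : Set (Finset ι)) (δ : ι) (η : ℕ → ι),
      Win (m+1) F δ →
      (∀ i, i + 1 < m → η i < η (i + 1)) →
      (∀ i, i < m → go hnm ((List.range i).map η) m F δ < η i) →
      (Finset.range (m+1)).image (fun i => go hnm ((List.range i).map η) m F δ) ∈ F := by
  intro m
  induction m with
  | zero =>
    intro F δ η hw _ _
    obtain ⟨η', hη'⟩ := hnm (pick hnm 0 F δ)
    have h0 := pick_spec hnm hw η' hη'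
    rw [win_zero_iff] at h0
    have : (Finset.range 1).image (fun i => go hnm ((List.range i).map η) 0 F δ)
        = {pick hnm 0 F δ} := by
      rw [Finset.range_one, Finset.image_singleton]
      rfl
    rw [this]
    simpa [subF] using h0
  | succ m ih =>
    intro F δ η hw hmono hleg
    set γ0 := pick hnm (m+1) F δ with hγ0
    have hγ0lt : γ0 < η 0 := by
      have := hleg 0 (by omega)
      simpa [go_nil] using this
    have hw' : Win (m+1) (subF F γ0) (η 0) := pick_spec hnm hw (η 0) hγ0lt
    have hgoeq : ∀ i : ℕ, go hnm ((List.range (i+1)).map η) (m+1) F δ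
        = go hnm ((List.range i).map (fun j => η (j+1))) m (subF F γ0) (η 0) := by
      intro i
      rw [List.range_succ_eq_map, List.map_cons, go_cons, List.map_map]
      rfl
    have hIH := ih (subF F γ0) (η 0) (fun j => η (j+1))
      hw'
      (fun i hi => hmono (i+1) (by omega))
      (fun i hi => by rw [← hgoeq i]; exact hleg (i+1) (by omega))
    have himg : (Finset.range (m+2)).image (fun i => go hnm ((List.range i).map η) (m+1) F δ)
        = insert γ0 ((Finset.range (m+1)).image
            (fun i => go hnm ((List.range i).map (fun j => η (j+1))) m (subF F γ0) (η 0))) := by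
      ext b
      simp only [Finset.mem_image, Finset.mem_insert, Finset.mem_range]
      constructor
      · rintro ⟨i, hi, rfl⟩
        cases i with
        | zero => left; simp [go_nil, hγ0]
        | succ j => right; exact ⟨j, by omega, (hgoeq j).symm⟩
      · rintro (rfl | ⟨j, hj, rfl⟩)
        · exact ⟨0, by omega, by simp [go_nil, hγ0]⟩
        · exact ⟨j+1, by omega, hgoeq j⟩
    rw [himg]
    exact hIH


lemma infinite_of_nomax (hnm : ∀ x : ι, ∃ y, x < y) : Infinite ι := by
  let f : ℕ → ι := fun k => Nat.rec (Classical.arbitrary ι) (fun _ x => (hnm x).choose) k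
  have hf : ∀ k, f k < f (k+1) := fun k => (hnm (f k)).choose_spec
  exact Infinite.of_injective f (strictMono_nat_of_lt_succ hf).injective

lemma exists_strategy (hnm : ∀ x : ι, ∃ y, x < y) (B : Set (Finset ι))
    (hL : ∀ A : Set ι, A.Infinite → ∀ n : ℕ, ∃ s ∈ B, ↑s ⊆ A ∧ s.card = n) (n : ℕ) :
    ∃ σ : Finset ι → ι,
      (∀ s, ∀ a ∈ s, a < σ s) ∧
      ∀ η : ℕ → ι,
        (∀ i, i + 1 < n - 1 → η i < η (i + 1)) →
        (∀ i, i < n - 1 → σ ((Finset.range i).image η) < η i) →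
        (Finset.range n).image (fun i => σ ((Finset.range i).image η)) ∈ B := by
  have hempty : ∅ ∈ B := by
    have : Infinite ι := infinite_of_nomax hnm
    obtain ⟨s, hsB, -, hcard⟩ := hL Set.univ Set.infinite_univ 0
    rwa [Finset.card_eq_zero.mp hcard] at hsB
  set δs := Classical.arbitrary ι with hδs
  refine ⟨fun s => go hnm (s.sort (· ≤ ·)) (n-1) B δs, ?_, ?_⟩
  · intro s a ha
    have hmem : a ∈ s.sort (· ≤ ·) := Finset.mem_sort _ |>.mpr ha
    have hne : s.sort (· ≤ ·) ≠ [] := List.ne_nil_of_mem hmem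
    exact lt_of_le_of_lt (sorted_le_getLast (Finset.pairwise_sort _ _) hmem hne)
      (go_gt_getLast hnm _ hne _ _ _)
  · intro η hmono hleg
    cases n with
    | zero => simpa using hempty
    | succ m =>
      simp only [Nat.add_sub_cancel] at hmono hleg ⊢
      have hchain : ∀ k, k < m → ∀ j, j < k → η j < η k := by
        intro k hk
        induction k with
        | zero => omega
        | succ k ihk =>
          intro j hj
          have hlast : η k < η (k+1) := hmono k (by omega)
          rcases Nat.lt_or_ge j k with h | h
          · exact lt_trans (ihk (by omega) j h) hlast
          · have hjk : j = k := by omega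
            subst hjk; exact hlast
      have hsort : ∀ i, i ≤ m →
          ((Finset.range i).image η).sort (· ≤ ·) = (List.range i).map η := by
        intro i hi
        have hch : ∀ a b : ℕ, a ∈ List.range i → b ∈ List.range i → a < b → η a < η b := by
          intro a b _ hb hab
          exact hchain b (by have := List.mem_range.mp hb; omega) a hab
        have hpw : ((List.range i).map η).Pairwise (· < ·) := by
          rw [List.pairwise_map]
          exact List.Pairwise.imp_of_mem (fun ha hb hab => hch _ _ ha hb hab)
            List.pairwise_lt_range
        refine List.Perm.eq_of_pairwise'
          (Finset.pairwise_sort _ _) (hpw.imp (fun h => le_of_lt h))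
          (List.perm_of_nodup_nodup_toFinset_eq (Finset.sort_nodup _ _)
            (hpw.imp (fun h => ne_of_lt h)) ?_)
        rw [Finset.sort_toFinset]
        ext a; simp
      have hσ : ∀ i, i ≤ m →
          go hnm (((Finset.range i).image η).sort (· ≤ ·)) m B δs
            = go hnm ((List.range i).map η) m B δs := by
        intro i hi; rw [hsort i hi]
      have hmg := main_go hnm m B δs η (winOfLarge hnm B hL (m+1) δs) hmono
        (fun i hi => by rw [← hσ i (le_of_lt hi)]; exact hleg i hi)
      rw [Finset.image_congr (fun i hi => hσ i (by
        have := Finset.mem_range.mp hi; omega))]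
      exact hmg

end Stmt19Aux

namespace Stmt19Aux

lemma adm_lt {ι : Type*} [LinearOrder ι] {B : Set (Finset ι)} {E : ℕ → Finset ι} {d : ℕ}
    (h : AdmissibleI B E d) :
    ∀ i j, i < j → j < d → ∀ a ∈ E i, ∀ b ∈ E j, a < b := by
  obtain ⟨g, -, hg, -, h4⟩ := h
  have gmono : ∀ p q, p < q → q < d → g p < g q := by
    intro p q hpq hqd
    induction q with
    | zero => omega
    | succ q ihq =>
      have hq1 : g q < g (q+1) := hg q (by omega)
      rcases Nat.lt_or_ge p q with h | h
      · exact lt_trans (ihq h (by omega)) hq1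
      · have : p = q := by omega
        subst this; exact hq1
  intro i j hij hjd a ha b hb
  have h1 : a < g (i+1) := (h4 i (by omega)).1 a ha
  obtain ⟨j', rfl⟩ : ∃ j', j = j'+1 := ⟨j-1, by omega⟩
  have h2 : g (j'+1) ≤ b := (h4 j' (by omega)).2 b hb
  have h3 : g (i+1) ≤ g (j'+1) := by
    rcases Nat.lt_or_ge (i+1) (j'+1) with h | h
    · exact le_of_lt (gmono _ _ h hjd)
    · have : i + 1 = j' + 1 := by omega
      rw [this]
  exact lt_of_lt_of_le h1 (le_trans h3 h2)

lemma supNorm_single {ι : Type*} (γ : ι) (c : ℝ) : supNorm (Finsupp.single γ c) = |c| := by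
  unfold supNorm
  have hub : ∀ r ∈ Set.range fun δ => |Finsupp.single γ c δ|, r ≤ |c| := by
    rintro r ⟨δ, rfl⟩
    rcases eq_or_ne γ δ with h | h
    · simp [Finsupp.single_apply, h]
    · simp [Finsupp.single_apply, h, abs_nonneg]
  apply le_antisymm
  · exact csSup_le ⟨_, ⟨γ, rfl⟩⟩ hub
  · exact le_csSup ⟨|c|, hub⟩ ⟨γ, by simp⟩

universe u

lemma exists_ub {κ : Cardinal.{u}} (hreg : κ.IsRegular) {A : Type u} (hA : Cardinal.mk A < κ)
    (F : A → κ.ord.ToType) : ∃ z : κ.ord.ToType, ∀ i, F i < z := by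
  let e := Ordinal.ToType.mk (o := κ.ord)
  let f : A → Ordinal.{u} := fun i => (e.symm (F i)).1 + 1
  have hf : ∀ i, f i < κ.ord := by
    intro i
    show (e.symm (F i)).1 + 1 < κ.ord
    rw [Ordinal.add_one_eq_succ]
    exact (Cardinal.isSuccLimit_ord hreg.aleph0_le).succ_lt (e.symm (F i)).2
  have hsup : (⨆ i, f i) < κ.ord := Cardinal.iSup_lt_ord_of_isRegular hreg hA hf
  refine ⟨e ⟨_, hsup⟩, fun i => ?_⟩
  have h1 : e.symm (F i) < (⟨_, hsup⟩ : Set.Iio κ.ord) := by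
    rw [← Subtype.coe_lt_coe]
    exact lt_of_lt_of_le (lt_add_one _) (Ordinal.le_iSup f i)
  calc F i = e (e.symm (F i)) := (e.apply_symm_apply _).symm
  _ < e ⟨_, hsup⟩ := e.lt_iff_lt.mpr h1

lemma exists_limit {κ : Cardinal.{u}} (hreg : κ.IsRegular) (hunc : Cardinal.aleph0 < κ)
    (v : ℕ → κ.ord.ToType) :
    ∃ x, (∀ k, v k < x) ∧ ∀ a, a < x → ∃ k, a ≤ v k := by
  let e := Ordinal.ToType.mk (o := κ.ord)
  let f : ULift.{u} ℕ → Ordinal.{u} := fun k => (e.symm (v k.down)).1 + 1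
  have hf : ∀ k, f k < κ.ord := by
    intro k
    show (e.symm (v k.down)).1 + 1 < κ.ord
    rw [Ordinal.add_one_eq_succ]
    exact (Cardinal.isSuccLimit_ord hreg.aleph0_le).succ_lt (e.symm (v k.down)).2
  have hA : Cardinal.mk (ULift.{u} ℕ) < κ := by
    rw [Cardinal.mk_eq_aleph0]
    exact hunc
  have hsup : (⨆ k, f k) < κ.ord := Cardinal.iSup_lt_ord_of_isRegular hreg hA hf
  refine ⟨e ⟨_, hsup⟩, fun k => ?_, fun a ha => ?_⟩
  · have h1 : e.symm (v k) < (⟨_, hsup⟩ : Set.Iio κ.ord) := by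
      rw [← Subtype.coe_lt_coe]
      exact lt_of_lt_of_le (lt_add_one _) (Ordinal.le_iSup f ⟨k⟩)
    calc v k = e (e.symm (v k)) := (e.apply_symm_apply _).symm
    _ < e ⟨_, hsup⟩ := e.lt_iff_lt.mpr h1
  · have h1 : e.symm a < e.symm (e ⟨_, hsup⟩) := e.symm.lt_iff_lt.mpr ha
    rw [e.symm_apply_apply] at h1
    rw [← Subtype.coe_lt_coe] at h1
    obtain ⟨k, hk⟩ := Ordinal.lt_iSup_iff.mp h1
    refine ⟨k.down, ?_⟩
    have h2 : (e.symm a).1 ≤ (e.symm (v k.down)).1 := by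
      have hk' : (e.symm a).1 < (e.symm (v k.down)).1 + 1 := hk
      rw [Ordinal.add_one_eq_succ, Order.lt_succ_iff] at hk'
      exact hk'
    have h3 : e.symm a ≤ e.symm (v k.down) := Subtype.coe_le_coe.mp h2
    calc a = e (e.symm a) := (e.apply_symm_apply _).symm
    _ ≤ e (e.symm (v k.down)) := e.le_iff_le.mpr h3
    _ = v k.down := e.apply_symm_apply _

end Stmt19Aux


open Stmt19Aux in
/-- Let `κ` be an uncountable regular cardinal, `B` a hereditary large family of
finite subsets of `κ`, and `0 < θ < 1`.  Then (i) Player I has a winning strategy in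
every `(B,n)`-game, and (ii) any norm on `c₀₀(κ)` satisfying the Tsirelson implicit
equation for `(θ, B)` admits a set `C` of `κ` many unit vectors that are
`θ⁻¹`-equivalent to the unit basis of `ℓ₁(κ)`. -/
theorem stmt19 (κ : Cardinal) (hreg : κ.IsRegular) (hunc : Cardinal.aleph0 < κ)
    (B : Set (Finset κ.ord.ToType))
    (hher : ∀ s ∈ B, ∀ t ⊆ s, t ∈ B)
    (hlarge : ∀ A : Set κ.ord.ToType, A.Infinite →
      ∀ n : ℕ, ∃ s ∈ B, ↑s ⊆ A ∧ s.card = n)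
    (θ : ℝ) (hθ0 : 0 < θ) (hθ1 : θ < 1) :
    -- (i) Player I has a winning strategy in the `(B,n)`-game for every `n`
    (∀ n : ℕ, ∃ σ : Finset κ.ord.ToType → κ.ord.ToType,
      (∀ s, ∀ a ∈ s, a < σ s) ∧
      ∀ η : ℕ → κ.ord.ToType,
        (∀ i, i + 1 < n - 1 → η i < η (i + 1)) →
        (∀ i, i < n - 1 → σ ((Finset.range i).image η) < η i) →
        (Finset.range n).image (fun i => σ ((Finset.range i).image η)) ∈ B) ∧
    -- (ii) the ℓ₁-copy inside any Tsirelson-type norm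
    (∀ N : (κ.ord.ToType →₀ ℝ) → ℝ,
      (∀ x, 0 ≤ N x) →
      (∀ x, N x = 0 ↔ x = 0) →
      (∀ (r : ℝ) (x), N (r • x) = |r| * N x) →
      (∀ x y, N (x + y) ≤ N x + N y) →
      -- the Tsirelson implicit equation
      (∀ x : κ.ord.ToType →₀ ℝ,
        N x = max (supNorm x)
          (sSup {r : ℝ | ∃ (d : ℕ) (E : ℕ → Finset κ.ord.ToType),
            (∀ i, i + 1 < d → ∀ a ∈ E i, ∀ b ∈ E (i + 1), a < b) ∧
            AdmissibleI B E d ∧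
            r = θ * ∑ i ∈ Finset.range d, N (x.filter fun γ => γ ∈ E i)})) →
      ∃ C : Set κ.ord.ToType, Cardinal.mk C = κ ∧
        ∀ s : Finset κ.ord.ToType, ↑s ⊆ C → ∀ a : κ.ord.ToType → ℝ,
          θ * ∑ γ ∈ s, |a γ| ≤ N (∑ γ ∈ s, a γ • Finsupp.single γ (1 : ℝ)) ∧
          N (∑ γ ∈ s, a γ • Finsupp.single γ (1 : ℝ)) ≤ ∑ γ ∈ s, |a γ|) := by
  have hκmk : Cardinal.mk κ.ord.ToType = κ := by
    rw [Cardinal.mk_toType, Cardinal.card_ord]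
  haveI hInf : Infinite κ.ord.ToType := by
    rw [Cardinal.infinite_iff, hκmk]
    exact hreg.aleph0_le
  haveI : Nonempty κ.ord.ToType := inferInstance
  haveI := Cardinal.noMaxOrder hreg.aleph0_le
  have hnm : ∀ x : κ.ord.ToType, ∃ y, x < y := fun x => exists_gt x
  have parti : ∀ n : ℕ, ∃ σ : Finset κ.ord.ToType → κ.ord.ToType,
      (∀ s, ∀ a ∈ s, a < σ s) ∧
      ∀ η : ℕ → κ.ord.ToType,
        (∀ i, i + 1 < n - 1 → η i < η (i + 1)) →
        (∀ i, i < n - 1 → σ ((Finset.range i).image η) < η i) →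
        (Finset.range n).image (fun i => σ ((Finset.range i).image η)) ∈ B :=
    fun n => exists_strategy hnm B hlarge n
  refine ⟨parti, ?_⟩
  intro N hN0 hNeq hNsmul hNadd hN
  set S : (κ.ord.ToType →₀ ℝ) → Set ℝ := fun x =>
    {r : ℝ | ∃ (d : ℕ) (E : ℕ → Finset κ.ord.ToType),
      (∀ i, i + 1 < d → ∀ a ∈ E i, ∀ b ∈ E (i + 1), a < b) ∧
      AdmissibleI B E d ∧
      r = θ * ∑ i ∈ Finset.range d, N (x.filter fun γ => γ ∈ E i)} with hSdef
  have hNS : ∀ x, N x = max (supNorm x) (sSup (S x)) := by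
    intro x
    simp only [hSdef]
    exact hN x
  have hzeroN : N 0 = 0 := (hNeq 0).mpr rfl
  have hBempty : ∅ ∈ B := by
    obtain ⟨s, hsB, -, hcard⟩ := hlarge Set.univ Set.infinite_univ 0
    rwa [Finset.card_eq_zero.mp hcard] at hsB
  have hmem0 : ∀ x, (0:ℝ) ∈ S x := by
    intro x
    simp only [hSdef]
    refine ⟨0, fun _ => ∅, fun i hi => absurd hi (by omega),
      ⟨fun _ => Classical.arbitrary _, by simpa using hBempty,
        fun i hi => absurd hi (by omega), fun h => absurd h (by omega),
        fun i hi => absurd hi (by omega)⟩, by simp⟩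
  have hNsingle : ∀ (γ : κ.ord.ToType) (c : ℝ), N (Finsupp.single γ c) = |c| := by
    intro γ c
    have hsup_le : sSup (S (Finsupp.single γ c)) ≤ θ * N (Finsupp.single γ c) := by
      apply csSup_le ⟨0, hmem0 _⟩
      intro r hr
      simp only [hSdef] at hr
      obtain ⟨d, E, hblk, hadm, rfl⟩ := hr
      have hbound : ∑ i ∈ Finset.range d, N ((Finsupp.single γ c).filter fun δ => δ ∈ E i)
          ≤ N (Finsupp.single γ c) := by
        by_cases hex : ∃ i ∈ Finset.range d, γ ∈ E i
        · obtain ⟨i0, hi0d, hi0⟩ := hex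
          have huniq : ∀ j ∈ Finset.range d, j ≠ i0 →
              N ((Finsupp.single γ c).filter fun δ => δ ∈ E j) = 0 := by
            intro j hjd hne
            have hγ : γ ∉ E j := by
              intro hγj
              rcases lt_or_gt_of_ne hne with h | h
              · exact lt_irrefl γ (adm_lt hadm j i0 h (Finset.mem_range.mp hi0d) γ hγj γ hi0)
              · exact lt_irrefl γ (adm_lt hadm i0 j h (Finset.mem_range.mp hjd) γ hi0 γ hγj)
            rw [Finsupp.filter_single_of_neg _ hγ]
            exact hzeroN
          rw [Finset.sum_eq_single_of_mem i0 hi0d huniq,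
            Finsupp.filter_single_of_pos _ hi0]
        · push_neg at hex
          have hall : ∀ j ∈ Finset.range d,
              N ((Finsupp.single γ c).filter fun δ => δ ∈ E j) = 0 := by
            intro j hjd
            rw [Finsupp.filter_single_of_neg _ (hex j hjd)]
            exact hzeroN
          rw [Finset.sum_congr rfl hall]
          simpa using hN0 _
      exact mul_le_mul_of_nonneg_left hbound (le_of_lt hθ0)
    have hmax := hNS (Finsupp.single γ c)
    rw [supNorm_single] at hmax
    have hge : |c| ≤ N (Finsupp.single γ c) := hmax ▸ le_max_left _ _
    have hle : N (Finsupp.single γ c) ≤ max |c| (θ * N (Finsupp.single γ c)) := by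
      calc N (Finsupp.single γ c) = max |c| (sSup (S (Finsupp.single γ c))) := hmax
      _ ≤ max |c| (θ * N (Finsupp.single γ c)) := max_le_max (le_refl _) hsup_le
    rcases le_or_gt (θ * N (Finsupp.single γ c)) |c| with h | h
    · exact le_antisymm (by rwa [max_eq_left h] at hle) hge
    · exfalso
      rw [max_eq_right (le_of_lt h)] at hle
      nlinarith [abs_nonneg c, hN0 (Finsupp.single γ c)]
  have hNsmulS : ∀ (γ : κ.ord.ToType) (c : ℝ), N (c • Finsupp.single γ (1:ℝ)) = |c| := by
    intro γ c
    rw [hNsmul, hNsingle]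
    simp
  have hNsum_le : ∀ (s : Finset κ.ord.ToType) (f : κ.ord.ToType → (κ.ord.ToType →₀ ℝ)),
      N (∑ γ ∈ s, f γ) ≤ ∑ γ ∈ s, N (f γ) := by
    intro s f
    induction s using Finset.induction_on with
    | empty => simp [hzeroN]
    | insert _ _ h ih =>
      rename_i b t
      rw [Finset.sum_insert h, Finset.sum_insert h]
      exact le_trans (hNadd _ _) (by linarith)
  have hNl1 : ∀ y : κ.ord.ToType →₀ ℝ, N y ≤ ∑ γ ∈ y.support, |y γ| := by
    intro y
    have hy : (∑ γ ∈ y.support, Finsupp.single γ (y γ)) = y := Finsupp.sum_single y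
    calc N y = N (∑ γ ∈ y.support, Finsupp.single γ (y γ)) := by rw [hy]
    _ ≤ ∑ γ ∈ y.support, N (Finsupp.single γ (y γ)) := hNsum_le _ _
    _ = ∑ γ ∈ y.support, |y γ| := Finset.sum_congr rfl (fun γ _ => hNsingle γ (y γ))
  have hbddS : ∀ x, ∀ r ∈ S x, r ≤ ∑ γ ∈ x.support, |x γ| := by
    intro x r hr
    simp only [hSdef] at hr
    obtain ⟨d, E, hblk, hadm, rfl⟩ := hr
    have hdisj : (↑(Finset.range d) : Set ℕ).PairwiseDisjoint
        (fun i => x.support.filter fun δ => δ ∈ E i) := by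
      intro i hi j hj hne
      rw [Finset.coe_range, Set.mem_Iio] at hi hj
      rw [Function.onFun, Finset.disjoint_left]
      intro γ hγi hγj
      rw [Finset.mem_filter] at hγi hγj
      rcases lt_or_gt_of_ne hne with h | h
      · exact lt_irrefl γ (adm_lt hadm i j h hj γ hγi.2 γ hγj.2)
      · exact lt_irrefl γ (adm_lt hadm j i h hi γ hγj.2 γ hγi.2)
    have hfil : ∀ i, N (x.filter fun δ => δ ∈ E i)
        ≤ ∑ γ ∈ x.support.filter (fun δ => δ ∈ E i), |x γ| := by
      intro i
      refine le_trans (hNl1 _) (le_of_eq ?_)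
      rw [Finsupp.support_filter]
      apply Finset.sum_congr rfl
      intro γ hγ
      rw [Finset.mem_filter] at hγ
      rw [Finsupp.filter_apply, if_pos hγ.2]
    have hT0 : (0:ℝ) ≤ ∑ i ∈ Finset.range d, N (x.filter fun δ => δ ∈ E i) :=
      Finset.sum_nonneg (fun i _ => hN0 _)
    have hTle : ∑ i ∈ Finset.range d, N (x.filter fun δ => δ ∈ E i)
        ≤ ∑ γ ∈ x.support, |x γ| := by
      calc ∑ i ∈ Finset.range d, N (x.filter fun δ => δ ∈ E i)
          ≤ ∑ i ∈ Finset.range d, ∑ γ ∈ x.support.filter (fun δ => δ ∈ E i), |x γ| :=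
            Finset.sum_le_sum (fun i _ => hfil i)
      _ = ∑ γ ∈ (Finset.range d).biUnion (fun i => x.support.filter fun δ => δ ∈ E i), |x γ| :=
            (Finset.sum_biUnion hdisj).symm
      _ ≤ ∑ γ ∈ x.support, |x γ| :=
            Finset.sum_le_sum_of_subset_of_nonneg
              (Finset.biUnion_subset.mpr (fun i _ => Finset.filter_subset _ _))
              (fun γ _ _ => abs_nonneg _)
    nlinarith [hTle, hT0, hθ1, hθ0]
  choose Strat hS1 hS2 using parti
  have hstep : ∀ z : κ.ord.ToType, ∃ z', z < z' ∧
      ∀ (n : ℕ) (l : List κ.ord.ToType), (∀ a ∈ l, a < z) → Strat n l.toFinset < z' := by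
    intro z
    have h1 : Cardinal.mk ↥(Set.Iio z) < κ := Cardinal.mk_Iio_toType_ord_lt z
    have h2 : Cardinal.mk (List ↥(Set.Iio z)) < κ :=
      lt_of_le_of_lt (Cardinal.mk_list_le_max _) (max_lt hunc h1)
    have h3 : Cardinal.mk (ULift ℕ × List ↥(Set.Iio z)) < κ := by
      rw [Cardinal.mk_prod]
      simp only [Cardinal.lift_id]
      refine Cardinal.mul_lt_of_lt hreg.aleph0_le ?_ h2
      rw [Cardinal.mk_eq_aleph0]
      exact hunc
    obtain ⟨z1, hz1⟩ := exists_ub hreg h3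
      (fun p : ULift ℕ × List ↥(Set.Iio z) => Strat p.1.down ((p.2.map Subtype.val).toFinset))
    obtain ⟨z', hz'⟩ := hnm (max z z1)
    refine ⟨z', lt_of_le_of_lt (le_max_left _ _) hz', ?_⟩
    intro n l hl
    have hlF : (((l.attach.map (fun a => (⟨a.1, hl a.1 a.2⟩ : ↥(Set.Iio z))))).map
        Subtype.val).toFinset = l.toFinset := by
      rw [List.map_map]
      congr 1
      exact List.attach_map_subtype_val l
    have hb := hz1 ⟨⟨n⟩, l.attach.map (fun a => ⟨a.1, hl a.1 a.2⟩)⟩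
    simp only [hlF] at hb
    exact lt_trans hb (lt_of_le_of_lt (le_max_right _ _) hz')
  choose step hstep1 hstep2 using hstep
  set C : Set κ.ord.ToType :=
    {x | ∀ (n : ℕ) (l : List κ.ord.ToType), (∀ a ∈ l, a < x) → Strat n l.toFinset < x}
    with hCdef
  have hCunb : ∀ z : κ.ord.ToType, ∃ x ∈ C, z < x := by
    intro z
    set v : ℕ → κ.ord.ToType := fun k => step^[k+1] z with hvdef
    have hvs : ∀ k, v (k+1) = step (v k) := by
      intro k
      simp only [hvdef]
      rw [Function.iterate_succ_apply']
    have hv : ∀ k, v k < v (k+1) := by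
      intro k; rw [hvs]; exact hstep1 (v k)
    have hvmono : StrictMono v := strictMono_nat_of_lt_succ hv
    obtain ⟨x, hx1, hx2⟩ := exists_limit hreg hunc v
    refine ⟨x, ?_, ?_⟩
    · intro n l hl
      have hK : ∃ K, ∀ a ∈ l, a < v K := by
        induction l with
        | nil => exact ⟨0, by simp⟩
        | cons b l ih =>
          obtain ⟨K, hKl⟩ := ih (fun a ha => hl a (List.mem_cons_of_mem _ ha))
          obtain ⟨k, hk⟩ := hx2 b (hl b List.mem_cons_self)
          refine ⟨max (k+1) K, ?_⟩
          intro a ha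
          rcases List.mem_cons.mp ha with rfl | ha'
          · exact lt_of_le_of_lt hk
              (lt_of_lt_of_le (hv k) (hvmono.monotone (le_max_left _ _)))
          · exact lt_of_lt_of_le (hKl a ha') (hvmono.monotone (le_max_right _ _))
      obtain ⟨K, hKl⟩ := hK
      have hSt : Strat n l.toFinset < step (v K) := hstep2 (v K) n l hKl
      rw [← hvs K] at hSt
      exact lt_trans hSt (hx1 (K+1))
    · exact lt_trans (show z < v 0 from hstep1 z) (hx1 0)
  have hCmk : Cardinal.mk C = κ := by
    refine le_antisymm (le_trans (Cardinal.mk_subtype_le _) (le_of_eq hκmk)) ?_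
    by_contra hlt
    rw [not_le] at hlt
    obtain ⟨z, hz⟩ := exists_ub hreg hlt (fun c : C => c.1)
    obtain ⟨x, hxC, hzx⟩ := hCunb z
    exact absurd (hz ⟨x, hxC⟩) (not_lt.mpr (le_of_lt hzx))
  refine ⟨C, hCmk, ?_⟩
  intro s hsC a
  have hupper : N (∑ γ ∈ s, a γ • Finsupp.single γ (1:ℝ)) ≤ ∑ γ ∈ s, |a γ| :=
    le_trans (hNsum_le s _) (le_of_eq (Finset.sum_congr rfl (fun γ _ => hNsmulS γ (a γ))))
  refine ⟨?_, hupper⟩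
  rcases Finset.eq_empty_or_nonempty s with rfl | hsne
  · simp [hzeroN]
  set x := ∑ γ ∈ s, a γ • Finsupp.single γ (1:ℝ) with hxdef
  set m := s.card with hm
  have hm1 : 1 ≤ m := Finset.card_pos.mpr hsne
  set L := s.sort (· ≤ ·) with hLdef
  have hLlen : L.length = m := Finset.length_sort _
  set w := Classical.arbitrary κ.ord.ToType with hw
  set γf : ℕ → κ.ord.ToType := fun i => L.getD i w with hγf
  have hget : ∀ i (h : i < m), γf i = L.get ⟨i, by rw [hLlen]; exact h⟩ := by
    intro i h
    exact List.getD_eq_get L w ⟨i, by rw [hLlen]; exact h⟩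
  have hγmem : ∀ i, i < m → γf i ∈ s := by
    intro i h
    rw [hget i h]
    exact (Finset.mem_sort _).mp (L.get_mem _)
  have hγmono : ∀ i j, i < j → j < m → γf i < γf j := by
    intro i j hij hjm
    rw [hget i (lt_trans hij hjm), hget j hjm]
    exact (Finset.sortedLT_sort s).strictMono_get
      (Fin.mk_lt_mk.mpr hij)
  have himg : s = (Finset.range m).image γf := by
    ext b
    simp only [Finset.mem_image, Finset.mem_range]
    constructor
    · intro hb
      have hbL : b ∈ L := (Finset.mem_sort _).mpr hb
      obtain ⟨i, hi⟩ := List.mem_iff_get.mp hbL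
      have him : i.1 < m := by rw [← hLlen]; exact i.2
      exact ⟨i.1, him, (hget i.1 him).trans ((congrArg L.get (Fin.ext rfl)).trans hi)⟩
    · rintro ⟨i, hi, rfl⟩
      exact hγmem i hi
  set η : ℕ → κ.ord.ToType := fun i => γf (min i (m-1)) with hη
  have hηeq : ∀ i, i < m → η i = γf i := by
    intro i h
    simp only [hη]
    congr 1
    omega
  have hCγ : ∀ i, i < m → ∀ (n' : ℕ), Strat n' ((Finset.range i).image η) < γf i := by
    intro i him n'
    have hγC : γf i ∈ C := hsC (hγmem i him)
    have hfin : ((List.range i).map η).toFinset = (Finset.range i).image η := by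
      ext b; simp
    rw [← hfin]
    apply hγC n'
    intro b hb
    simp only [List.mem_map, List.mem_range] at hb
    obtain ⟨j, hj, rfl⟩ := hb
    rw [hηeq j (by omega)]
    exact hγmono j i hj him
  set g : ℕ → κ.ord.ToType := fun i => Strat m ((Finset.range i).image η) with hg
  have hglt : ∀ i, i < m → g i < γf i := fun i him => hCγ i him m
  have hggt : ∀ i, i < m → γf i < g (i+1) := by
    intro i him
    apply hS1 m
    rw [Finset.mem_image]
    exact ⟨i, Finset.mem_range.mpr (by omega), hηeq i him⟩
  have hGB : (Finset.range m).image g ∈ B := by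
    apply hS2 m η
    · intro i hi
      rw [hηeq i (by omega), hηeq (i+1) (by omega)]
      exact hγmono i (i+1) (by omega) (by omega)
    · intro i hi
      rw [hηeq i (by omega)]
      exact hCγ i (by omega) m
  set E : ℕ → Finset κ.ord.ToType := fun i => if i < m then {γf i} else ∅ with hE
  have hblkE : ∀ i, i + 1 < m → ∀ a' ∈ E i, ∀ b ∈ E (i+1), a' < b := by
    intro i hi a' ha' b hb
    simp only [hE, if_pos (show i < m by omega), if_pos hi, Finset.mem_singleton] at ha' hb
    rw [ha', hb]
    exact hγmono i (i+1) (by omega) hi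
  have hadmE : AdmissibleI B E m := by
    refine ⟨g, hGB, ?_, ?_, ?_⟩
    · intro i hi
      calc g i < γf i := hglt i (by omega)
      _ < g (i+1) := hggt i (by omega)
    · intro h0 a' ha'
      simp only [hE, if_pos (show 0 < m by omega), Finset.mem_singleton] at ha'
      rw [ha']
      exact le_of_lt (hglt 0 (by omega))
    · intro i hi
      constructor
      · intro a' ha'
        simp only [hE, if_pos (show i < m by omega), Finset.mem_singleton] at ha'
        rw [ha']
        exact hggt i (by omega)
      · intro a' ha'
        simp only [hE, if_pos hi, Finset.mem_singleton] at ha'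
        rw [ha']
        exact le_of_lt (hglt (i+1) hi)
  have hxapp : ∀ δ, x δ = if δ ∈ s then a δ else 0 := by
    intro δ
    rw [hxdef, Finset.sum_apply']
    have hterm : ∀ γ ∈ s, (a γ • Finsupp.single γ (1:ℝ)) δ = if γ = δ then a γ else 0 := by
      intro γ _
      rw [Finsupp.smul_apply, Finsupp.single_apply]
      by_cases h : γ = δ <;> simp [h]
    rw [Finset.sum_congr rfl hterm, Finset.sum_ite_eq' s δ a]
  have hfil : ∀ i, i < m →
      x.filter (fun δ => δ ∈ E i) = a (γf i) • Finsupp.single (γf i) (1:ℝ) := by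
    intro i him
    ext δ
    rw [Finsupp.filter_apply, Finsupp.smul_apply, Finsupp.single_apply]
    simp only [hE, if_pos him, Finset.mem_singleton]
    by_cases h : δ = γf i
    · subst h
      rw [if_pos rfl, if_pos rfl, hxapp, if_pos (hγmem i him)]
      simp
    · rw [if_neg h, if_neg (fun hh => h hh.symm)]
      simp
  have hsum_eq : ∑ i ∈ Finset.range m, N (x.filter fun γ => γ ∈ E i) = ∑ γ ∈ s, |a γ| := by
    have h1 : ∀ i ∈ Finset.range m, N (x.filter fun γ => γ ∈ E i) = |a (γf i)| := by
      intro i hi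
      rw [hfil i (Finset.mem_range.mp hi), hNsmulS]
    have hinj : ∀ p ∈ Finset.range m, ∀ q ∈ Finset.range m, γf p = γf q → p = q := by
      intro p hp q hq hpq
      by_contra hne
      rcases lt_or_gt_of_ne hne with h | h
      · exact absurd hpq (ne_of_lt (hγmono p q h (Finset.mem_range.mp hq)))
      · exact absurd hpq.symm (ne_of_lt (hγmono q p h (Finset.mem_range.mp hp)))
    rw [Finset.sum_congr rfl h1, himg, Finset.sum_image hinj]
  have hrmem : θ * ∑ i ∈ Finset.range m, N (x.filter fun γ => γ ∈ E i) ∈ S x := by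
    simp only [hSdef]
    exact ⟨m, E, hblkE, hadmE, rfl⟩
  rw [hsum_eq] at hrmem
  have h2 : θ * ∑ γ ∈ s, |a γ| ≤ sSup (S x) :=
    le_csSup ⟨∑ γ ∈ x.support, |x γ|, fun r hr => hbddS x r hr⟩ hrmem
  calc θ * ∑ γ ∈ s, |a γ| ≤ sSup (S x) := h2
  _ ≤ max (supNorm x) (sSup (S x)) := le_max_right _ _
  _ = N x := (hNS x).symm
end
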